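/- arXiv:1707.05854 — 8 statements merged into one kernel-verified Lean document; each statement's English description precedes it below -/
import Mathlib

section
/- Assume: (i) every nodal concentration value is strictly positive (c⁺_{j−1/2} > 0 and c⁻_{j+1/2} > 0 for every cell j); (ii) α > max{u⁺_{j+1/2}, 0} for every interior node index 1 ≤ j ≤ N−1; (iii) α̃ > D_M/2 where D_M is the maximum of all the values D⁻_{j+1/2}, D⁺_{j+1/2} over 1 ≤ j ≤ N−1; (iv) 6αλ ≤ Φ_m where Φ_m = min over 1 ≤ j ≤ N−1 of Φ_{j+1/2}, and 6λ(α − u⁺_{j+1/2}) ≤ Φ_{j+1/2} for every 1 ≤ j ≤ N−1; (v) Λ(3D⁻_{j+1/2} + 6α̃) ≤ Φ_{j−1/2} for 1 ≤ j ≤ N−1, Λ(3D⁺_{j−1/2} + 6α̃) ≤ Φ_{j+1/2} for 2 ≤ j ≤ N, and 6Λα̃ ≤ Φ_{j+1/2} for every 0 ≤ j ≤ N; (vi) for every cell j and every Gauss index i ∈ {1,2}: z₁ ≥ 0, 6Δt·z₁·max{P_j^i, 0} ≤ 1, if q_j^i ≥ 0 then c̃_j^i ≥ 0, and if q_j^i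 < 0 then c̃_j^i = c(x_j^i) and 6Δt(−q_j^i) < min{Φ_{j−1/2}, Φ_{j+1/2}}. Then the Euler-forward cell-average update satisfies r̄_j^{new} > 0 for every cell j = 1,…,N. -/
noncomputable section

namespace DG1Daux

lemma sqrt3_lt : Real.sqrt 3 < 3 := by
  nlinarith [Real.sq_sqrt (by norm_num : (0:ℝ) ≤ 3), Real.sqrt_nonneg 3]

lemma mu1_pos : 0 < (3 + Real.sqrt 3) / 6 := by
  nlinarith [Real.sqrt_nonneg 3]

lemma mu2_pos : 0 < (3 - Real.sqrt 3) / 6 := by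
  nlinarith [sqrt3_lt]

lemma conv_int (lam α u1 u2 a b c d Φ0 Φ1 : ℝ) (hlam : 0 < lam)
    (hα : 0 < α) (hu2 : u2 ≤ α) (ha : 0 < a) (hb : 0 < b) (hc : 0 < c) (hd : 0 < d)
    (h1 : 6*lam*(α - u1) ≤ Φ0) (h2 : 6*α*lam ≤ Φ1) :
    0 < (a*Φ0 + b*Φ1)/6 + lam*((u1*a - α*(a - c)) - (u2*d - α*(d - b))) := by
  nlinarith [mul_nonneg (by linarith : (0:ℝ) ≤ Φ0 - 6*lam*(α - u1)) ha.le,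
    mul_nonneg (by linarith : (0:ℝ) ≤ Φ1 - 6*α*lam) hb.le,
    mul_pos (mul_pos hlam hα) hc,
    mul_nonneg (mul_nonneg hlam.le (by linarith : (0:ℝ) ≤ α - u2)) hd.le]

lemma conv_left (lam α u2 a b d Φ0 Φ1 : ℝ) (hlam : 0 < lam)
    (hu2 : u2 ≤ α) (ha : 0 < a) (hb : 0 < b) (hd : 0 < d) (hΦ0 : 0 < Φ0)
    (h2 : 6*α*lam ≤ Φ1) :
    0 < (a*Φ0 + b*Φ1)/6 + lam*(0 - (u2*d - α*(d - b))) := by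
  nlinarith [mul_pos ha hΦ0,
    mul_nonneg (by linarith : (0:ℝ) ≤ Φ1 - 6*α*lam) hb.le,
    mul_nonneg (mul_nonneg hlam.le (by linarith : (0:ℝ) ≤ α - u2)) hd.le]

lemma conv_right (lam α u1 a b c Φ0 Φ1 : ℝ) (hlam : 0 < lam)
    (hα : 0 < α) (ha : 0 < a) (hb : 0 < b) (hc : 0 < c) (hΦ1 : 0 < Φ1)
    (h1 : 6*lam*(α - u1) ≤ Φ0) :
    0 < (a*Φ0 + b*Φ1)/6 + lam*((u1*a - α*(a - c)) - 0) := by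
  nlinarith [mul_pos hb hΦ1,
    mul_nonneg (by linarith : (0:ℝ) ≤ Φ0 - 6*lam*(α - u1)) ha.le,
    mul_pos (mul_pos hlam hα) hc]

lemma diff_int (Δx Δt αt Dm1 Dp1 Dm2 Dp2 p1 m1 p2 m2 p3 m3 Φ0 Φ1 : ℝ)
    (hΔx : 0 < Δx) (hΔt : 0 < Δt)
    (hDm1 : 0 ≤ Dm1) (hDp1 : 0 ≤ Dp1) (hDm2 : 0 ≤ Dm2) (hDp2 : 0 ≤ Dp2)
    (ha1 : Dm1 ≤ 2*αt) (ha2 : Dp2 ≤ 2*αt)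
    (h3 : (Δt/Δx^2)*(3*Dm2 + 6*αt) ≤ Φ0) (h4 : (Δt/Δx^2)*(3*Dp1 + 6*αt) ≤ Φ1)
    (hp1 : 0 ≤ p1) (hm1 : 0 ≤ m1) (hp2 : 0 ≤ p2) (hm2 : 0 ≤ m2)
    (hp3 : 0 ≤ p3) (hm3 : 0 ≤ m3) :
    0 ≤ (p2*Φ0 + m2*Φ1)/6
      - (Δt/Δx)*(((Dm1*((m1 - p1)/Δx) + Dp1*((m2 - p2)/Δx))/2 + (αt/Δx)*(p2 - m1))
        - ((Dm2*((m2 - p2)/Δx) + Dp2*((m3 - p3)/Δx))/2 + (αt/Δx)*(p3 - m2))) := by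
  have hΛ : 0 < Δt/Δx^2 := by positivity
  have key : (Δt/Δx)*(((Dm1*((m1 - p1)/Δx) + Dp1*((m2 - p2)/Δx))/2 + (αt/Δx)*(p2 - m1))
        - ((Dm2*((m2 - p2)/Δx) + Dp2*((m3 - p3)/Δx))/2 + (αt/Δx)*(p3 - m2)))
      = (Δt/Δx^2)*(((Dm1*(m1 - p1) + Dp1*(m2 - p2))/2 + αt*(p2 - m1))
        - ((Dm2*(m2 - p2) + Dp2*(m3 - p3))/2 + αt*(p3 - m2))) := by
    field_simp
  rw [key]
  set L := Δt/Δx^2 with hL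
  nlinarith [mul_nonneg (by linarith : (0:ℝ) ≤ Φ0 - L*(3*Dm2+6*αt)) hp2,
    mul_nonneg (mul_nonneg hΛ.le hDp1) hp2,
    mul_nonneg (by linarith : (0:ℝ) ≤ Φ1 - L*(3*Dp1+6*αt)) hm2,
    mul_nonneg (mul_nonneg hΛ.le hDm2) hm2,
    mul_nonneg (mul_nonneg hΛ.le (by linarith : (0:ℝ) ≤ 2*αt - Dm1)) hm1,
    mul_nonneg (mul_nonneg hΛ.le hDm1) hp1,
    mul_nonneg (mul_nonneg hΛ.le hDp2) hm3,
    mul_nonneg (mul_nonneg hΛ.le (by linarith : (0:ℝ) ≤ 2*αt - Dp2)) hp3]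

lemma diff_left (Δx Δt αt Dm1 Dp1 p1 m1 p2 m2 Φ0 Φ1 : ℝ)
    (hΔx : 0 < Δx) (hΔt : 0 < Δt)
    (hDm1 : 0 ≤ Dm1) (hDp1 : 0 ≤ Dp1) (ha2 : Dp1 ≤ 2*αt)
    (h3 : (Δt/Δx^2)*(3*Dm1 + 6*αt) ≤ Φ0) (h5 : 6*(Δt/Δx^2)*αt ≤ Φ1)
    (hp1 : 0 ≤ p1) (hm1 : 0 ≤ m1) (hp2 : 0 ≤ p2) (hm2 : 0 ≤ m2) :
    0 ≤ (p1*Φ0 + m1*Φ1)/6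
      - (Δt/Δx)*(0 - ((Dm1*((m1 - p1)/Δx) + Dp1*((m2 - p2)/Δx))/2 + (αt/Δx)*(p2 - m1))) := by
  have hΛ : 0 < Δt/Δx^2 := by positivity
  have hat : 0 ≤ αt := by linarith
  have key : (Δt/Δx)*(0 - ((Dm1*((m1 - p1)/Δx) + Dp1*((m2 - p2)/Δx))/2 + (αt/Δx)*(p2 - m1)))
      = (Δt/Δx^2)*(0 - ((Dm1*(m1 - p1) + Dp1*(m2 - p2))/2 + αt*(p2 - m1))) := by
    field_simp; ring
  rw [key]
  set L := Δt/Δx^2 with hL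
  nlinarith [mul_nonneg (by linarith : (0:ℝ) ≤ Φ0 - L*(3*Dm1+6*αt)) hp1,
    mul_nonneg (mul_nonneg hΛ.le hat) hp1,
    mul_nonneg (by linarith : (0:ℝ) ≤ Φ1 - 6*L*αt) hm1,
    mul_nonneg (mul_nonneg hΛ.le hDm1) hm1,
    mul_nonneg (mul_nonneg hΛ.le hDp1) hm2,
    mul_nonneg (mul_nonneg hΛ.le (by linarith : (0:ℝ) ≤ 2*αt - Dp1)) hp2]

lemma diff_right (Δx Δt αt Dm1 Dp1 p1 m1 p2 m2 Φ0 Φ1 : ℝ)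
    (hΔx : 0 < Δx) (hΔt : 0 < Δt)
    (hDm1 : 0 ≤ Dm1) (hDp1 : 0 ≤ Dp1) (ha1 : Dm1 ≤ 2*αt)
    (h5 : 6*(Δt/Δx^2)*αt ≤ Φ0) (h4 : (Δt/Δx^2)*(3*Dp1 + 6*αt) ≤ Φ1)
    (hp1 : 0 ≤ p1) (hm1 : 0 ≤ m1) (hp2 : 0 ≤ p2) (hm2 : 0 ≤ m2) :
    0 ≤ (p2*Φ0 + m2*Φ1)/6
      - (Δt/Δx)*(((Dm1*((m1 - p1)/Δx) + Dp1*((m2 - p2)/Δx))/2 + (αt/Δx)*(p2 - m1)) - 0) := by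
  have hΛ : 0 < Δt/Δx^2 := by positivity
  have hat : 0 ≤ αt := by linarith
  have key : (Δt/Δx)*(((Dm1*((m1 - p1)/Δx) + Dp1*((m2 - p2)/Δx))/2 + (αt/Δx)*(p2 - m1)) - 0)
      = (Δt/Δx^2)*(((Dm1*(m1 - p1) + Dp1*(m2 - p2))/2 + αt*(p2 - m1)) - 0) := by
    field_simp; ring
  rw [key]
  set L := Δt/Δx^2 with hL
  nlinarith [mul_nonneg (by linarith : (0:ℝ) ≤ Φ0 - 6*L*αt) hp2,
    mul_nonneg (mul_nonneg hΛ.le hDp1) hp2,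
    mul_nonneg (by linarith : (0:ℝ) ≤ Φ1 - L*(3*Dp1+6*αt)) hm2,
    mul_nonneg (mul_nonneg hΛ.le hat) hm2,
    mul_nonneg (mul_nonneg hΛ.le (by linarith : (0:ℝ) ≤ 2*αt - Dm1)) hm1,
    mul_nonneg (mul_nonneg hΛ.le hDm1) hp1]

lemma src_aux (Δt z1 P q ct c r m : ℝ) (hΔt : 0 < Δt) (hz1 : 0 ≤ z1)
    (hr : 0 < r) (hc : 0 < c) (hm : 0 < m)
    (hP : 6*Δt*z1*max P 0 ≤ 1) (hrm : m * c ≤ r)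
    (hq1 : 0 ≤ q → 0 ≤ ct)
    (hq2 : q < 0 → ct = c ∧ 6*Δt*(-q) < m) :
    0 < (1/6)*r + (Δt/2)*(ct*q - z1*r*P) := by
  have hPle : (Δt/2)*(z1*r*P) ≤ r/12 := by
    have h1 : z1*r*P ≤ z1*r*(max P 0) :=
      mul_le_mul_of_nonneg_left (le_max_left _ _) (mul_nonneg hz1 hr.le)
    have h2 : (Δt/2)*(z1*r*(max P 0)) = (r/12)*(6*Δt*z1*(max P 0)) := by ring
    have h3 : (r/12)*(6*Δt*z1*(max P 0)) ≤ (r/12)*1 := by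
      apply mul_le_mul_of_nonneg_left _ (by positivity)
      calc 6*Δt*z1*(max P 0) = 6*Δt*z1*max P 0 := by ring
        _ ≤ 1 := hP
    have h4 : (Δt/2)*(z1*r*P) ≤ (Δt/2)*(z1*r*(max P 0)) :=
      mul_le_mul_of_nonneg_left h1 (by positivity)
    linarith
  rcases le_or_gt 0 q with h|h
  · have := mul_nonneg (hq1 h) h
    nlinarith
  · obtain ⟨hct, hq⟩ := hq2 h
    rw [hct]
    have h4 : (c/12)*(6*Δt*(-q)) < (c/12)*m :=
      mul_lt_mul_of_pos_left hq (by positivity)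
    nlinarith

end DG1Daux

namespace DG1D

/-- Gauss constant `μ₁ = (3+√3)/6`. -/
def mu1 : ℝ := (3 + Real.sqrt 3) / 6

/-- Gauss constant `μ₂ = (3-√3)/6`. -/
def mu2 : ℝ := (3 - Real.sqrt 3) / 6

/-- Cell average `r̄_j = (r⁺_{j-1/2} + r⁻_{j+1/2})/2`.  Here `Φ j` denotes the nodal
porosity value `Φ_{j+1/2}` (so `Φ (j-1)` is `Φ_{j-1/2}`), `cP j` denotes the left-node
concentration trace `c⁺_{j-1/2}` of cell `j`, and `cM j` denotes the right-node trace
`c⁻_{j+1/2}` of cell `j`. -/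
def rbar (Φ cP cM : ℕ → ℝ) (j : ℕ) : ℝ :=
  (cP j * Φ (j - 1) + cM j * Φ j) / 2

/-- Convective flux `ûc_{j+1/2} = u⁺_{j+1/2}·c⁺_{j+1/2} - α·[c]_{j+1/2}` at the interior
node `j+1/2` (`u j` denotes `u⁺_{j+1/2}`; `c⁺_{j+1/2} = cP (j+1)`, `c⁻_{j+1/2} = cM j`). -/
def uc (u cP cM : ℕ → ℝ) (α : ℝ) (j : ℕ) : ℝ :=
  u j * cP (j + 1) - α * (cP (j + 1) - cM j)

/-- Diffusive flux `F̂_{j+1/2} = (D⁻·(c_x)⁻ + D⁺·(c_x)⁺)/2 + (α̃/Δx)·[c]_{j+1/2}` at the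
interior node `j+1/2`, with `(c_x)⁻_{j+1/2} = (c⁻_{j+1/2} - c⁺_{j-1/2})/Δx` and
`(c_x)⁺_{j+1/2} = (c⁻_{j+3/2} - c⁺_{j+1/2})/Δx`. -/
def Fhat (Dm Dp cP cM : ℕ → ℝ) (αt Δx : ℝ) (j : ℕ) : ℝ :=
  (Dm j * ((cM j - cP j) / Δx) + Dp j * ((cM (j + 1) - cP (j + 1)) / Δx)) / 2
    + (αt / Δx) * (cP (j + 1) - cM j)

/-- Value of the linear function `r` at Gauss point `i` of cell `j`:
`r(x_j^1) = μ₁·r⁺_{j-1/2} + μ₂·r⁻_{j+1/2}`, `r(x_j^2) = μ₂·r⁺_{j-1/2} + μ₁·r⁻_{j+1/2}`. -/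
def rG (Φ cP cM : ℕ → ℝ) (j : ℕ) (i : Fin 2) : ℝ :=
  if i = 0 then mu1 * (cP j * Φ (j - 1)) + mu2 * (cM j * Φ j)
  else mu2 * (cP j * Φ (j - 1)) + mu1 * (cM j * Φ j)

/-- Value of the linear function `c` at Gauss point `i` of cell `j`. -/
def cG (cP cM : ℕ → ℝ) (j : ℕ) (i : Fin 2) : ℝ :=
  if i = 0 then mu1 * cP j + mu2 * cM j else mu2 * cP j + mu1 * cM j

/-- Value of the linear interpolant of `Φ` at Gauss point `i` of cell `j`. -/
def phiG (Φ : ℕ → ℝ) (j : ℕ) (i : Fin 2) : ℝ :=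
  if i = 0 then mu1 * Φ (j - 1) + mu2 * Φ j else mu2 * Φ (j - 1) + mu1 * Φ j

/-- Convective flux with the boundary conventions `ûc_{1/2} = ûc_{N+1/2} = 0`. -/
def ucB (N : ℕ) (u cP cM : ℕ → ℝ) (α : ℝ) (j : ℕ) : ℝ :=
  if 1 ≤ j ∧ j ≤ N - 1 then uc u cP cM α j else 0

/-- Diffusive flux with the boundary conventions `F̂_{1/2} = F̂_{N+1/2} = 0`. -/
def FhatB (N : ℕ) (Dm Dp cP cM : ℕ → ℝ) (αt Δx : ℝ) (j : ℕ) : ℝ :=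
  if 1 ≤ j ∧ j ≤ N - 1 then Fhat Dm Dp cP cM αt Δx j else 0

/-- Velocity flux `û_{j+1/2}` with boundary conventions `û_{1/2} = û_{N+1/2} = 0`. -/
def uhatB (N : ℕ) (u : ℕ → ℝ) (j : ℕ) : ℝ :=
  if 1 ≤ j ∧ j ≤ N - 1 then u j else 0

/-- The Euler-forward cell-average update
`r̄_j^{new} = r̄_j + λ(ûc_{j-1/2} - ûc_{j+1/2}) - λ(F̂_{j-1/2} - F̂_{j+1/2})
  + (Δt/2)·∑_{i=1,2}(c̃_j^i·q_j^i - z₁·r(x_j^i)·P_j^i)`. -/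
def rbarnew (N : ℕ) (Φ cP cM u Dm Dp : ℕ → ℝ) (q ct P : ℕ → Fin 2 → ℝ)
    (α αt z1 Δx Δt : ℝ) (j : ℕ) : ℝ :=
  rbar Φ cP cM j
    + (Δt / Δx) * (ucB N u cP cM α (j - 1) - ucB N u cP cM α j)
    - (Δt / Δx) * (FhatB N Dm Dp cP cM αt Δx (j - 1) - FhatB N Dm Dp cP cM αt Δx j)
    + (Δt / 2) * ∑ i : Fin 2, (ct j i * q j i - z1 * rG Φ cP cM j i * P j i)

set_option maxHeartbeats 2000000 in
/-- Theorem 3.1 (1D, Euler forward): positivity of every new cell average `r̄_j^{new}`,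
`j = 1,…,N`, under the CFL-type conditions on `α`, `α̃`, `λ = Δt/Δx` and `Λ = Δt/Δx²`. -/
theorem positivity_of_cell_averages_1d
    (N : ℕ) (hN : 4 ≤ N) (Δx Δt : ℝ) (hΔx : 0 < Δx) (hΔt : 0 < Δt)
    (Φ cP cM u Dm Dp : ℕ → ℝ) (q ct P : ℕ → Fin 2 → ℝ) (α αt z1 : ℝ)
    (hΦ : ∀ j, j ≤ N → 0 < Φ j)
    (hDm : ∀ j, 1 ≤ j → j ≤ N - 1 → 0 ≤ Dm j)
    (hDp : ∀ j, 1 ≤ j → j ≤ N - 1 → 0 ≤ Dp j)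
    -- (i) all nodal concentration values strictly positive
    (hc : ∀ j, 1 ≤ j → j ≤ N → 0 < cP j ∧ 0 < cM j)
    -- (ii) α > max{u⁺_{j+1/2}, 0} at every interior node
    (hα : ∀ j, 1 ≤ j → j ≤ N - 1 → max (u j) 0 < α)
    -- (iii) α̃ > D_M/2
    (hαt : ∀ j, 1 ≤ j → j ≤ N - 1 → Dm j / 2 < αt ∧ Dp j / 2 < αt)
    -- (iv) 6αλ ≤ Φ_m and 6λ(α - u⁺_{j+1/2}) ≤ Φ_{j+1/2}
    (hCFL1 : ∀ j, 1 ≤ j → j ≤ N - 1 → 6 * α * (Δt / Δx) ≤ Φ j)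
    (hCFL2 : ∀ j, 1 ≤ j → j ≤ N - 1 → 6 * (Δt / Δx) * (α - u j) ≤ Φ j)
    -- (v) conditions on Λ = Δt/Δx²
    (hCFL3 : ∀ j, 1 ≤ j → j ≤ N - 1 → (Δt / Δx ^ 2) * (3 * Dm j + 6 * αt) ≤ Φ (j - 1))
    (hCFL4 : ∀ j, 2 ≤ j → j ≤ N → (Δt / Δx ^ 2) * (3 * Dp (j - 1) + 6 * αt) ≤ Φ j)
    (hCFL5 : ∀ j, j ≤ N → 6 * (Δt / Δx ^ 2) * αt ≤ Φ j)
    -- (vi) source conditions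
    (hz1 : 0 ≤ z1)
    (hP : ∀ j, 1 ≤ j → j ≤ N → ∀ i : Fin 2, 6 * Δt * z1 * max (P j i) 0 ≤ 1)
    (hq1 : ∀ j, 1 ≤ j → j ≤ N → ∀ i : Fin 2, 0 ≤ q j i → 0 ≤ ct j i)
    (hq2 : ∀ j, 1 ≤ j → j ≤ N → ∀ i : Fin 2, q j i < 0 →
      ct j i = cG cP cM j i ∧ 6 * Δt * (-q j i) < min (Φ (j - 1)) (Φ j)) :
    ∀ j, 1 ≤ j → j ≤ N → 0 < rbarnew N Φ cP cM u Dm Dp q ct P α αt z1 Δx Δt j := by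
  intro j hj1 hjN
  have hN1 : 1 ≤ N - 1 := by omega
  have hα0 : 0 < α := lt_of_le_of_lt (le_max_right (u 1) 0) (hα 1 le_rfl hN1)
  have hlam : 0 < Δt / Δx := div_pos hΔt hΔx
  have hΦ0 := hΦ (j - 1) (by omega)
  have hΦj := hΦ j hjN
  have hcj := hc j hj1 hjN
  have hmin : 0 < min (Φ (j - 1)) (Φ j) := lt_min hΦ0 hΦj
  -- Gauss-point evaluations
  have g0 : rG Φ cP cM j 0 = mu1 * (cP j * Φ (j - 1)) + mu2 * (cM j * Φ j) := by
    simp [rG]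
  have g1 : rG Φ cP cM j 1 = mu2 * (cP j * Φ (j - 1)) + mu1 * (cM j * Φ j) := by
    simp [rG]
  have cg0 : cG cP cM j 0 = mu1 * cP j + mu2 * cM j := by simp [cG]
  have cg1 : cG cP cM j 1 = mu2 * cP j + mu1 * cM j := by simp [cG]
  have hmu1 : 0 < mu1 := by unfold mu1; exact DG1Daux.mu1_pos
  have hmu2 : 0 < mu2 := by unfold mu2; exact DG1Daux.mu2_pos
  have hr0 : 0 < mu1 * (cP j * Φ (j - 1)) + mu2 * (cM j * Φ j) := by
    have := mul_pos hmu1 (mul_pos hcj.1 hΦ0)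
    have := mul_pos hmu2 (mul_pos hcj.2 hΦj)
    linarith
  have hr1 : 0 < mu2 * (cP j * Φ (j - 1)) + mu1 * (cM j * Φ j) := by
    have := mul_pos hmu2 (mul_pos hcj.1 hΦ0)
    have := mul_pos hmu1 (mul_pos hcj.2 hΦj)
    linarith
  have hcg0 : 0 < mu1 * cP j + mu2 * cM j := by
    have := mul_pos hmu1 hcj.1; have := mul_pos hmu2 hcj.2; linarith
  have hcg1 : 0 < mu2 * cP j + mu1 * cM j := by
    have := mul_pos hmu2 hcj.1; have := mul_pos hmu1 hcj.2; linarith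
  have hrm0 : min (Φ (j - 1)) (Φ j) * (mu1 * cP j + mu2 * cM j)
      ≤ mu1 * (cP j * Φ (j - 1)) + mu2 * (cM j * Φ j) := by
    nlinarith [mul_le_mul_of_nonneg_left (min_le_left (Φ (j - 1)) (Φ j))
        (mul_nonneg hmu1.le hcj.1.le),
      mul_le_mul_of_nonneg_left (min_le_right (Φ (j - 1)) (Φ j))
        (mul_nonneg hmu2.le hcj.2.le)]
  have hrm1 : min (Φ (j - 1)) (Φ j) * (mu2 * cP j + mu1 * cM j)
      ≤ mu2 * (cP j * Φ (j - 1)) + mu1 * (cM j * Φ j) := by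
    nlinarith [mul_le_mul_of_nonneg_left (min_le_left (Φ (j - 1)) (Φ j))
        (mul_nonneg hmu2.le hcj.1.le),
      mul_le_mul_of_nonneg_left (min_le_right (Φ (j - 1)) (Φ j))
        (mul_nonneg hmu1.le hcj.2.le)]
  have S0 := DG1Daux.src_aux Δt z1 (P j 0) (q j 0) (ct j 0)
    (mu1 * cP j + mu2 * cM j) (mu1 * (cP j * Φ (j - 1)) + mu2 * (cM j * Φ j))
    (min (Φ (j - 1)) (Φ j)) hΔt hz1 hr0 hcg0 hmin (hP j hj1 hjN 0) hrm0
    (hq1 j hj1 hjN 0)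
    (fun h => by
      obtain ⟨h1, h2⟩ := hq2 j hj1 hjN 0 h
      exact ⟨by rw [h1, cg0], h2⟩)
  have S1 := DG1Daux.src_aux Δt z1 (P j 1) (q j 1) (ct j 1)
    (mu2 * cP j + mu1 * cM j) (mu2 * (cP j * Φ (j - 1)) + mu1 * (cM j * Φ j))
    (min (Φ (j - 1)) (Φ j)) hΔt hz1 hr1 hcg1 hmin (hP j hj1 hjN 1) hrm1
    (hq1 j hj1 hjN 1)
    (fun h => by
      obtain ⟨h1, h2⟩ := hq2 j hj1 hjN 1 h
      exact ⟨by rw [h1, cg1], h2⟩)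
  have hmu : mu1 + mu2 = 1 := by unfold mu1 mu2; ring
  have H3 : 0 < (cP j * Φ (j - 1) + cM j * Φ j) / 6
      + (Δt / 2) * ((ct j 0 * q j 0 - z1 * (mu1 * (cP j * Φ (j - 1)) + mu2 * (cM j * Φ j)) * P j 0)
        + (ct j 1 * q j 1 - z1 * (mu2 * (cP j * Φ (j - 1)) + mu1 * (cM j * Φ j)) * P j 1)) := by
    have hRR : (mu1 * (cP j * Φ (j - 1)) + mu2 * (cM j * Φ j))
        + (mu2 * (cP j * Φ (j - 1)) + mu1 * (cM j * Φ j))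
        = cP j * Φ (j - 1) + cM j * Φ j := by
      linear_combination (cP j * Φ (j - 1) + cM j * Φ j) * hmu
    nlinarith [S0, S1]
  rcases (by omega : j = 1 ∨ j = N ∨ (2 ≤ j ∧ j + 1 ≤ N)) with hj | hj | ⟨hj2, hj3⟩
  · -- left boundary cell
    have e0 : ucB N u cP cM α (j - 1) = 0 := by
      unfold ucB; rw [if_neg (by omega)]
    have e2 : ucB N u cP cM α j = u j * cP (j + 1) - α * (cP (j + 1) - cM j) := by
      unfold ucB uc; rw [if_pos ⟨by omega, by omega⟩]
    have f0 : FhatB N Dm Dp cP cM αt Δx (j - 1) = 0 := by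
      unfold FhatB; rw [if_neg (by omega)]
    have f2 : FhatB N Dm Dp cP cM αt Δx j
        = (Dm j * ((cM j - cP j) / Δx) + Dp j * ((cM (j + 1) - cP (j + 1)) / Δx)) / 2
          + (αt / Δx) * (cP (j + 1) - cM j) := by
      unfold FhatB Fhat; rw [if_pos ⟨by omega, by omega⟩]
    have hcj1 := hc (j + 1) (by omega) (by omega)
    have H1 := DG1Daux.conv_left (Δt / Δx) α (u j) (cP j) (cM j) (cP (j + 1))
      (Φ (j - 1)) (Φ j) hlam (le_of_lt (lt_of_le_of_lt (le_max_left _ _)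
        (hα j (by omega) (by omega)))) hcj.1 hcj.2 hcj1.1 hΦ0
      (hCFL1 j (by omega) (by omega))
    have H2 := DG1Daux.diff_left Δx Δt αt (Dm j) (Dp j) (cP j) (cM j)
      (cP (j + 1)) (cM (j + 1)) (Φ (j - 1)) (Φ j) hΔx hΔt
      (hDm j (by omega) (by omega)) (hDp j (by omega) (by omega))
      (by linarith [(hαt j (by omega) (by omega)).2])
      (hCFL3 j (by omega) (by omega)) (hCFL5 j (by omega))
      hcj.1.le hcj.2.le hcj1.1.le hcj1.2.le
    simp only [rbarnew, rbar, Fin.sum_univ_two, e0, e2, f0, f2, g0, g1]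
    linarith
  · -- right boundary cell
    have hjj : j - 1 + 1 = j := by omega
    have e1 : ucB N u cP cM α (j - 1)
        = u (j - 1) * cP j - α * (cP j - cM (j - 1)) := by
      unfold ucB uc; rw [if_pos ⟨by omega, by omega⟩, hjj]
    have e2 : ucB N u cP cM α j = 0 := by
      unfold ucB; rw [if_neg (by omega)]
    have f1 : FhatB N Dm Dp cP cM αt Δx (j - 1)
        = (Dm (j - 1) * ((cM (j - 1) - cP (j - 1)) / Δx) + Dp (j - 1) * ((cM j - cP j) / Δx)) / 2
          + (αt / Δx) * (cP j - cM (j - 1)) := by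
      unfold FhatB Fhat; rw [if_pos ⟨by omega, by omega⟩, hjj]
    have f2 : FhatB N Dm Dp cP cM αt Δx j = 0 := by
      unfold FhatB; rw [if_neg (by omega)]
    have hcjm := hc (j - 1) (by omega) (by omega)
    have H1 := DG1Daux.conv_right (Δt / Δx) α (u (j - 1)) (cP j) (cM j) (cM (j - 1))
      (Φ (j - 1)) (Φ j) hlam hα0 hcj.1 hcj.2 hcjm.2 hΦj
      (hCFL2 (j - 1) (by omega) (by omega))
    have H2 := DG1Daux.diff_right Δx Δt αt (Dm (j - 1)) (Dp (j - 1))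
      (cP (j - 1)) (cM (j - 1)) (cP j) (cM j) (Φ (j - 1)) (Φ j) hΔx hΔt
      (hDm (j - 1) (by omega) (by omega)) (hDp (j - 1) (by omega) (by omega))
      (by linarith [(hαt (j - 1) (by omega) (by omega)).1])
      (hCFL5 (j - 1) (by omega)) (hCFL4 j (by omega) (by omega))
      hcjm.1.le hcjm.2.le hcj.1.le hcj.2.le
    simp only [rbarnew, rbar, Fin.sum_univ_two, e1, e2, f1, f2, g0, g1]
    linarith
  · -- interior cell
    have hjj : j - 1 + 1 = j := by omega
    have e1 : ucB N u cP cM α (j - 1)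
        = u (j - 1) * cP j - α * (cP j - cM (j - 1)) := by
      unfold ucB uc; rw [if_pos ⟨by omega, by omega⟩, hjj]
    have e2 : ucB N u cP cM α j = u j * cP (j + 1) - α * (cP (j + 1) - cM j) := by
      unfold ucB uc; rw [if_pos ⟨by omega, by omega⟩]
    have f1 : FhatB N Dm Dp cP cM αt Δx (j - 1)
        = (Dm (j - 1) * ((cM (j - 1) - cP (j - 1)) / Δx) + Dp (j - 1) * ((cM j - cP j) / Δx)) / 2
          + (αt / Δx) * (cP j - cM (j - 1)) := by
      unfold FhatB Fhat; rw [if_pos ⟨by omega, by omega⟩, hjj]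
    have f2 : FhatB N Dm Dp cP cM αt Δx j
        = (Dm j * ((cM j - cP j) / Δx) + Dp j * ((cM (j + 1) - cP (j + 1)) / Δx)) / 2
          + (αt / Δx) * (cP (j + 1) - cM j) := by
      unfold FhatB Fhat; rw [if_pos ⟨by omega, by omega⟩]
    have hcjm := hc (j - 1) (by omega) (by omega)
    have hcj1 := hc (j + 1) (by omega) (by omega)
    have H1 := DG1Daux.conv_int (Δt / Δx) α (u (j - 1)) (u j) (cP j) (cM j)
      (cM (j - 1)) (cP (j + 1)) (Φ (j - 1)) (Φ j) hlam hα0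
      (le_of_lt (lt_of_le_of_lt (le_max_left _ _) (hα j (by omega) (by omega))))
      hcj.1 hcj.2 hcjm.2 hcj1.1
      (hCFL2 (j - 1) (by omega) (by omega)) (hCFL1 j (by omega) (by omega))
    have H2 := DG1Daux.diff_int Δx Δt αt (Dm (j - 1)) (Dp (j - 1)) (Dm j) (Dp j)
      (cP (j - 1)) (cM (j - 1)) (cP j) (cM j) (cP (j + 1)) (cM (j + 1))
      (Φ (j - 1)) (Φ j) hΔx hΔt
      (hDm (j - 1) (by omega) (by omega)) (hDp (j - 1) (by omega) (by omega))
      (hDm j (by omega) (by omega)) (hDp j (by omega) (by omega))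
      (by linarith [(hαt (j - 1) (by omega) (by omega)).1])
      (by linarith [(hαt j (by omega) (by omega)).2])
      (hCFL3 j (by omega) (by omega)) (hCFL4 j (by omega) (by omega))
      hcjm.1.le hcjm.2.le hcj.1.le hcj.2.le hcj1.1.le hcj1.2.le
    simp only [rbarnew, rbar, Fin.sum_univ_two, e1, e2, f1, f2, g0, g1]
    linarith

end DG1D
end
end

section
/- Assume: (i) every nodal concentration value lies in [0,1] (0 ≤ c⁺_{j−1/2} ≤ 1 and 0 ≤ c⁻_{j+1/2} ≤ 1 for every cell j, equivalently 0 ≤ r ≤ Φ at every node); (ii) α > max{u⁺_{j+1/2}, 0} for every 1 ≤ j ≤ N−1; (iii) α̃ > D_M/2 with D_M the maximum of all D⁻_{j+1/2}, D⁺_{j+1/2} over 1 ≤ j ≤ N−1; (iv) 6αλ ≤ Φ_m with Φ_m = min over 1 ≤ j ≤ N−1 of Φ_{j+1/2}, and 6λ(α − u⁺_{j+1/2}) ≤ Φ_{j+1/2} for every 1 ≤ j ≤ N−1; (v) Λ(3D⁻_{j+1/2} + 6α̃) ≤ Φ_{j−1/2} for 1 ≤ j ≤ N−1, Λ(3D⁺_{j−1/2}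 + 6α̃) ≤ Φ_{j+1/2} for 2 ≤ j ≤ N, and 6Λα̃ ≤ Φ_{j+1/2} for every 0 ≤ j ≤ N; (vi) z₁ ≥ 0 and z₂ ≥ 0, and for every cell j and i ∈ {1,2}: 6Δt·z₁·max{P_j^i,0} ≤ 1, 6Δt·z₂·max{P_j^i,0} ≤ 1, 0 ≤ c̃_j^i ≤ 1, if q_j^i < 0 then c̃_j^i = c(x_j^i) and 6Δt(−q_j^i) < min{Φ_{j−1/2}, Φ_{j+1/2}}; (vii) the discrete pressure relation holds in every cell j: (Δx/2)·∑_{i=1,2}(z₁·r(x_j^i) + z₂·(Φ(x_j^i) − r(x_j^i)))·P_j^i = û_{j−1/2} − û_{j+1/2} + (Δx/2)·∑_{i=1,2} q_j^i, where û_{j+1/2} = u⁺_{j+1/2} for 1 ≤ j ≤ N−1, û_{1/2} = û_{N+1/2} = 0, and Φ(x_j^1) = μ₁Φ_{j−1/2} + μ₂Φ_{j+1/2}, Φ(x_j^2) = μ₂Φ_{j−1/2} + μ₁Φ_{j+1/2}. Then the Euler-forward cell-average update satisfies 0 ≤ r̄_j^{new} ≤ Φ̄_j := (Φ_{j−1/2}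 + Φ_{j+1/2})/2 for every cell j = 1,…,N. -/
noncomputable section

namespace DG1D

lemma sqrt3_le_three : Real.sqrt 3 ≤ 3 := by
  nlinarith [Real.sq_sqrt (by norm_num : (0:ℝ) ≤ 3), Real.sqrt_nonneg 3]

lemma mu1_nonneg : 0 ≤ mu1 := by
  have := Real.sqrt_nonneg 3; unfold mu1; linarith

lemma mu2_nonneg : 0 ≤ mu2 := by
  have := sqrt3_le_three; unfold mu2; linarith

lemma rG_zero (Φ cP cM : ℕ → ℝ) (j : ℕ) :
    rG Φ cP cM j 0 = mu1 * (cP j * Φ (j - 1)) + mu2 * (cM j * Φ j) := by simp [rG]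

lemma rG_one (Φ cP cM : ℕ → ℝ) (j : ℕ) :
    rG Φ cP cM j 1 = mu2 * (cP j * Φ (j - 1)) + mu1 * (cM j * Φ j) := by simp [rG]

lemma cG_zero (cP cM : ℕ → ℝ) (j : ℕ) :
    cG cP cM j 0 = mu1 * cP j + mu2 * cM j := by simp [cG]

lemma cG_one (cP cM : ℕ → ℝ) (j : ℕ) :
    cG cP cM j 1 = mu2 * cP j + mu1 * cM j := by simp [cG]

lemma src_nonneg (Δt m1 m2 a b Φl Φr qv ctv Pv z : ℝ)
    (hΔt : 0 ≤ Δt) (hm1 : 0 ≤ m1) (hm2 : 0 ≤ m2) (ha : 0 ≤ a) (hb : 0 ≤ b)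
    (hz : 0 ≤ z)
    (hP : 6 * Δt * z * max Pv 0 ≤ 1) (hctv : 0 ≤ ctv)
    (hra : 0 ≤ a * Φl) (hrb : 0 ≤ b * Φr)
    (hq : qv < 0 → ctv = m1 * a + m2 * b ∧ 6 * Δt * (-qv) ≤ min Φl Φr) :
    0 ≤ (m1 * (a * Φl) + m2 * (b * Φr)) / 6
      + (Δt / 2) * (ctv * qv - z * (m1 * (a * Φl) + m2 * (b * Φr)) * Pv) := by
  obtain ⟨R, hR⟩ : ∃ R, R = m1 * (a * Φl) + m2 * (b * Φr) := ⟨_, rfl⟩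
  rw [← hR]
  have hR0 : 0 ≤ R := hR ▸ add_nonneg (mul_nonneg hm1 hra) (mul_nonneg hm2 hrb)
  have h1 : z * R * Pv ≤ z * R * max Pv 0 :=
    mul_le_mul_of_nonneg_left (le_max_left _ _) (mul_nonneg hz hR0)
  have h2 : Δt * (z * R * max Pv 0) ≤ R / 6 := by
    nlinarith [mul_le_mul_of_nonneg_right hP hR0]
  have h3 : -(R / 6) ≤ Δt * (ctv * qv) := by
    rcases lt_or_ge qv 0 with hq0 | hq0
    · obtain ⟨hct', hqm⟩ := hq hq0
      have hml : min Φl Φr ≤ Φl := min_le_left _ _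
      have hmr : min Φl Φr ≤ Φr := min_le_right _ _
      have hcm : ctv * min Φl Φr ≤ R := by
        rw [hct'] at *
        rw [hR]
        nlinarith [mul_le_mul_of_nonneg_left hml (mul_nonneg hm1 ha),
          mul_le_mul_of_nonneg_left hmr (mul_nonneg hm2 hb),
          mul_nonneg hm1 ha, mul_nonneg hm2 hb]
      have h4 : Δt * (-qv) * ctv ≤ (min Φl Φr / 6) * ctv :=
        mul_le_mul_of_nonneg_right (by linarith) hctv
      nlinarith
    · nlinarith [mul_nonneg hΔt (mul_nonneg hctv hq0)]
  have h5 : Δt * (z * R * Pv) ≤ Δt * (z * R * max Pv 0) :=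
    mul_le_mul_of_nonneg_left h1 hΔt
  nlinarith
set_option maxHeartbeats 1600000 in
lemma lower_bound
    (N : ℕ) (hN : 4 ≤ N) (Δx Δt : ℝ) (hΔx : 0 < Δx) (hΔt : 0 < Δt)
    (Φ cP cM u Dm Dp : ℕ → ℝ) (q ct P : ℕ → Fin 2 → ℝ) (α αt z1 : ℝ)
    (hΦ : ∀ j, j ≤ N → 0 < Φ j)
    (hDm : ∀ j, 1 ≤ j → j ≤ N - 1 → 0 ≤ Dm j)
    (hDp : ∀ j, 1 ≤ j → j ≤ N - 1 → 0 ≤ Dp j)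
    (hc : ∀ j, 1 ≤ j → j ≤ N →
      (0 ≤ cP j ∧ cP j ≤ 1) ∧ (0 ≤ cM j ∧ cM j ≤ 1))
    (hα : ∀ j, 1 ≤ j → j ≤ N - 1 → max (u j) 0 < α)
    (hαt : ∀ j, 1 ≤ j → j ≤ N - 1 → Dm j / 2 < αt ∧ Dp j / 2 < αt)
    (hCFL1 : ∀ j, 1 ≤ j → j ≤ N - 1 → 6 * α * (Δt / Δx) ≤ Φ j)
    (hCFL2 : ∀ j, 1 ≤ j → j ≤ N - 1 → 6 * (Δt / Δx) * (α - u j) ≤ Φ j)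
    (hCFL3 : ∀ j, 1 ≤ j → j ≤ N - 1 → (Δt / Δx ^ 2) * (3 * Dm j + 6 * αt) ≤ Φ (j - 1))
    (hCFL4 : ∀ j, 2 ≤ j → j ≤ N → (Δt / Δx ^ 2) * (3 * Dp (j - 1) + 6 * αt) ≤ Φ j)
    (hCFL5 : ∀ j, j ≤ N → 6 * (Δt / Δx ^ 2) * αt ≤ Φ j)
    (hz1 : 0 ≤ z1)
    (hP1 : ∀ j, 1 ≤ j → j ≤ N → ∀ i : Fin 2, 6 * Δt * z1 * max (P j i) 0 ≤ 1)
    (hct : ∀ j, 1 ≤ j → j ≤ N → ∀ i : Fin 2, 0 ≤ ct j i ∧ ct j i ≤ 1)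
    (hq2 : ∀ j, 1 ≤ j → j ≤ N → ∀ i : Fin 2, q j i < 0 →
      ct j i = cG cP cM j i ∧ 6 * Δt * (-q j i) < min (Φ (j - 1)) (Φ j)) :
    ∀ j, 1 ≤ j → j ≤ N → 0 ≤ rbarnew N Φ cP cM u Dm Dp q ct P α αt z1 Δx Δt j := by
  intro j hj1 hjN
  have hΦl : 0 < Φ (j - 1) := hΦ _ (by omega)
  have hΦr : 0 < Φ j := hΦ _ hjN
  have hcj := hc j hj1 hjN
  have hlam : 0 ≤ Δt / Δx := by positivity
  have hLam2 : 0 ≤ Δt / Δx ^ 2 := by positivity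
  have hs0 : 0 ≤ (mu1 * (cP j * Φ (j - 1)) + mu2 * (cM j * Φ j)) / 6
      + (Δt / 2) * (ct j 0 * q j 0
        - z1 * (mu1 * (cP j * Φ (j - 1)) + mu2 * (cM j * Φ j)) * P j 0) :=
    src_nonneg Δt mu1 mu2 (cP j) (cM j) (Φ (j - 1)) (Φ j) (q j 0) (ct j 0) (P j 0) z1
      hΔt.le mu1_nonneg mu2_nonneg hcj.1.1 hcj.2.1 hz1 (hP1 j hj1 hjN 0)
      (hct j hj1 hjN 0).1 (mul_nonneg hcj.1.1 hΦl.le) (mul_nonneg hcj.2.1 hΦr.le)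
      (fun hqlt => by
        obtain ⟨h1, h2⟩ := hq2 j hj1 hjN 0 hqlt
        exact ⟨by rw [h1, cG_zero], h2.le⟩)
  have hs1 : 0 ≤ (mu2 * (cP j * Φ (j - 1)) + mu1 * (cM j * Φ j)) / 6
      + (Δt / 2) * (ct j 1 * q j 1
        - z1 * (mu2 * (cP j * Φ (j - 1)) + mu1 * (cM j * Φ j)) * P j 1) :=
    src_nonneg Δt mu2 mu1 (cP j) (cM j) (Φ (j - 1)) (Φ j) (q j 1) (ct j 1) (P j 1) z1
      hΔt.le mu2_nonneg mu1_nonneg hcj.1.1 hcj.2.1 hz1 (hP1 j hj1 hjN 1)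
      (hct j hj1 hjN 1).1 (mul_nonneg hcj.1.1 hΦl.le) (mul_nonneg hcj.2.1 hΦr.le)
      (fun hqlt => by
        obtain ⟨h1, h2⟩ := hq2 j hj1 hjN 1 hqlt
        exact ⟨by rw [h1, cG_one], h2.le⟩)
  have hmu : mu1 + mu2 = 1 := by unfold mu1 mu2; ring
  have em1 : mu1 * (cP j * Φ (j - 1)) + mu2 * (cP j * Φ (j - 1)) = cP j * Φ (j - 1) := by
    linear_combination (cP j * Φ (j - 1)) * hmu
  have em2 : mu1 * (cM j * Φ j) + mu2 * (cM j * Φ j) = cM j * Φ j := by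
    linear_combination (cM j * Φ j) * hmu
  rcases (by omega : j = 1 ∨ j = N ∨ (2 ≤ j ∧ j + 1 ≤ N)) with rfl | hcase | ⟨h2j, hjN1⟩
  · -- j = 1
    have e0 : (1 ≤ 1 - 1 ∧ 1 - 1 ≤ N - 1) = False := eq_false (by omega)
    have e1 : (1 ≤ 1 ∧ 1 ≤ N - 1) = True := eq_true (by omega)
    have hc2 := hc 2 (by omega) (by omega)
    have hα1 := hα 1 (by omega) (by omega)
    have huα : u 1 < α := lt_of_le_of_lt (le_max_left _ _) hα1
    have hα0 : (0:ℝ) < α := lt_of_le_of_lt (le_max_right _ _) hα1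
    have hαt1 := hαt 1 (by omega) (by omega)
    have hDm1 := hDm 1 (by omega) (by omega)
    have hDp1 := hDp 1 (by omega) (by omega)
    have hαt0 : (0:ℝ) ≤ αt := by linarith [hαt1.1]
    have hC1 := hCFL1 1 (by omega) (by omega)
    have hC3 := hCFL3 1 (by omega) (by omega)
    have hC5 := hCFL5 1 (by omega)
    have hLamAt : 0 ≤ Δt / Δx ^ 2 * αt := mul_nonneg hLam2 hαt0
    simp only [Nat.sub_self] at hC3
    have g1 : 0 ≤ cP 1 * (Φ 0 / 3 - Δt / Δx ^ 2 * (Dm 1 / 2)) :=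
      mul_nonneg hcj.1.1 (by linarith)
    have g2 : 0 ≤ cM 1 * (Φ 1 / 6 - Δt / Δx * α) :=
      mul_nonneg hcj.2.1 (by linarith)
    have g3 : 0 ≤ cM 1 * (Φ 1 / 6 - Δt / Δx ^ 2 * αt) :=
      mul_nonneg hcj.2.1 (by linarith)
    have g4 : 0 ≤ cM 1 * (Δt / Δx ^ 2 * (Dm 1 / 2)) :=
      mul_nonneg hcj.2.1 (mul_nonneg hLam2 (by linarith))
    have g5 : 0 ≤ Δt / Δx * (α - u 1) * cP 2 :=
      mul_nonneg (mul_nonneg hlam (by linarith)) hc2.1.1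
    have g6 : 0 ≤ Δt / Δx ^ 2 * ((αt - Dp 1 / 2) * cP 2) :=
      mul_nonneg hLam2 (mul_nonneg (by linarith [hαt1.2]) hc2.1.1)
    have g7 : 0 ≤ Δt / Δx ^ 2 * (Dp 1 / 2 * cM 2) :=
      mul_nonneg hLam2 (mul_nonneg (by linarith) hc2.2.1)
    simp only [rbarnew, rbar, ucB, FhatB, uc, Fhat, Fin.sum_univ_two, rG_zero, rG_one,
      e0, e1, if_true, if_false, Nat.sub_self] at hs0 hs1 em1 em2 ⊢
    ring_nf at g1 g2 g3 g4 g5 g6 g7 hs0 hs1 em1 em2 ⊢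
    linarith [em1, em2]
  · -- j = N
    obtain ⟨M, rfl⟩ : ∃ M, N = M + 1 := ⟨N - 1, by omega⟩
    subst hcase
    have e0 : (1 ≤ M ∧ M ≤ M) = True := eq_true (by omega)
    have e1 : (1 ≤ M + 1 ∧ M + 1 ≤ M) = False := eq_false (by omega)
    have hcM := hc M (by omega) (by omega)
    have hαM := hα M (by omega) (by omega)
    have huα : u M < α := lt_of_le_of_lt (le_max_left _ _) hαM
    have hα0 : (0:ℝ) < α := lt_of_le_of_lt (le_max_right _ _) hαM
    have hαtM := hαt M (by omega) (by omega)
    have hDmM := hDm M (by omega) (by omega)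
    have hDpM := hDp M (by omega) (by omega)
    have hαt0 : (0:ℝ) ≤ αt := by linarith [hαtM.1]
    have hLamAt : 0 ≤ Δt / Δx ^ 2 * αt := mul_nonneg hLam2 hαt0
    have hC2 := hCFL2 M (by omega) (by omega)
    have hC4 := hCFL4 (M + 1) (by omega) (by omega)
    have hC5 := hCFL5 M (by omega)
    simp only [Nat.add_sub_cancel] at hC4
    have k1 : 0 ≤ cP (M + 1) * (Φ M / 6 - Δt / Δx * (α - u M)) :=
      mul_nonneg hcj.1.1 (by linarith)
    have k2 : 0 ≤ cP (M + 1) * (Φ M / 6 - Δt / Δx ^ 2 * αt) :=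
      mul_nonneg hcj.1.1 (by linarith)
    have k3 : 0 ≤ cP (M + 1) * (Δt / Δx ^ 2 * (Dp M / 2)) :=
      mul_nonneg hcj.1.1 (mul_nonneg hLam2 (by linarith))
    have k4 : 0 ≤ cM (M + 1) * (Φ (M + 1) / 3 - Δt / Δx ^ 2 * (Dp M / 2)) :=
      mul_nonneg hcj.2.1 (by linarith)
    have k5 : 0 ≤ Δt / Δx * α * cM M :=
      mul_nonneg (mul_nonneg hlam hα0.le) hcM.2.1
    have k6 : 0 ≤ Δt / Δx ^ 2 * ((αt - Dm M / 2) * cM M) :=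
      mul_nonneg hLam2 (mul_nonneg (by linarith [hαtM.1]) hcM.2.1)
    have k7 : 0 ≤ Δt / Δx ^ 2 * (Dm M / 2 * cP M) :=
      mul_nonneg hLam2 (mul_nonneg (by linarith) hcM.1.1)
    simp only [rbarnew, rbar, ucB, FhatB, uc, Fhat, Fin.sum_univ_two, rG_zero, rG_one,
      e0, e1, if_true, if_false, Nat.add_sub_cancel] at hs0 hs1 em1 em2 ⊢
    ring_nf at k1 k2 k3 k4 k5 k6 k7 hs0 hs1 em1 em2 ⊢
    linarith [em1, em2]
  · -- interior
    obtain ⟨k, rfl⟩ : ∃ k, j = k + 1 := ⟨j - 1, by omega⟩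
    have e0 : (1 ≤ k ∧ k ≤ N - 1) = True := eq_true (by omega)
    have e1 : (1 ≤ k + 1 ∧ k + 1 ≤ N - 1) = True := eq_true (by omega)
    have hck := hc k (by omega) (by omega)
    have hck2 := hc (k + 2) (by omega) (by omega)
    have hαk := hα k (by omega) (by omega)
    have hαk1 := hα (k + 1) (by omega) (by omega)
    have huk : u k < α := lt_of_le_of_lt (le_max_left _ _) hαk
    have huk1 : u (k + 1) < α := lt_of_le_of_lt (le_max_left _ _) hαk1
    have hα0 : (0:ℝ) < α := lt_of_le_of_lt (le_max_right _ _) hαk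
    have hαtk := hαt k (by omega) (by omega)
    have hαtk1 := hαt (k + 1) (by omega) (by omega)
    have hDmk := hDm k (by omega) (by omega)
    have hDmk1 := hDm (k + 1) (by omega) (by omega)
    have hDpk := hDp k (by omega) (by omega)
    have hDpk1 := hDp (k + 1) (by omega) (by omega)
    have hC1 := hCFL1 (k + 1) (by omega) (by omega)
    have hC2 := hCFL2 k (by omega) (by omega)
    have hC3 := hCFL3 (k + 1) (by omega) (by omega)
    have hC4 := hCFL4 (k + 1) (by omega) (by omega)
    simp only [Nat.add_sub_cancel] at hC3 hC4
    have f1 : 0 ≤ cP (k + 1) * (Φ k / 6 - Δt / Δx * (α - u k)) :=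
      mul_nonneg hcj.1.1 (by linarith)
    have f2 : 0 ≤ cM (k + 1) * (Φ (k + 1) / 6 - Δt / Δx * α) :=
      mul_nonneg hcj.2.1 (by linarith)
    have f3 : 0 ≤ Δt / Δx * α * cM k :=
      mul_nonneg (mul_nonneg hlam hα0.le) hck.2.1
    have f4 : 0 ≤ Δt / Δx * (α - u (k + 1)) * cP (k + 2) :=
      mul_nonneg (mul_nonneg hlam (by linarith)) hck2.1.1
    have f5 : 0 ≤ cP (k + 1) * (Φ k / 6 - Δt / Δx ^ 2 * (αt + Dm (k + 1) / 2)) :=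
      mul_nonneg hcj.1.1 (by linarith)
    have f6 : 0 ≤ cP (k + 1) * (Δt / Δx ^ 2 * (Dp k / 2)) :=
      mul_nonneg hcj.1.1 (mul_nonneg hLam2 (by linarith))
    have f7 : 0 ≤ cM (k + 1) * (Φ (k + 1) / 6 - Δt / Δx ^ 2 * (αt + Dp k / 2)) :=
      mul_nonneg hcj.2.1 (by linarith)
    have f8 : 0 ≤ cM (k + 1) * (Δt / Δx ^ 2 * (Dm (k + 1) / 2)) :=
      mul_nonneg hcj.2.1 (mul_nonneg hLam2 (by linarith))
    have f9 : 0 ≤ Δt / Δx ^ 2 * (Dm k / 2 * cP k + (αt - Dm k / 2) * cM k) :=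
      mul_nonneg hLam2 (add_nonneg (mul_nonneg (by linarith) hck.1.1)
        (mul_nonneg (by linarith [hαtk.1]) hck.2.1))
    have f10 : 0 ≤ Δt / Δx ^ 2 * (Dp (k + 1) / 2 * cM (k + 2)
        + (αt - Dp (k + 1) / 2) * cP (k + 2)) :=
      mul_nonneg hLam2 (add_nonneg (mul_nonneg (by linarith) hck2.2.1)
        (mul_nonneg (by linarith [hαtk1.2]) hck2.1.1))
    simp only [rbarnew, rbar, ucB, FhatB, uc, Fhat, Fin.sum_univ_two, rG_zero, rG_one,
      e0, e1, if_true, Nat.add_sub_cancel] at hs0 hs1 em1 em2 ⊢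
    ring_nf at f1 f2 f3 f4 f5 f6 f7 f8 f9 f10 hs0 hs1 em1 em2 ⊢
    linarith [em1, em2]
lemma ucB_compl (N : ℕ) (u cP cM : ℕ → ℝ) (α : ℝ) (k : ℕ) :
    ucB N u (fun m => 1 - cP m) (fun m => 1 - cM m) α k
      = uhatB N u k - ucB N u cP cM α k := by
  simp only [ucB, uhatB, uc]
  split_ifs <;> ring

lemma FhatB_compl (N : ℕ) (Dm Dp cP cM : ℕ → ℝ) (αt Δx : ℝ) (k : ℕ) :
    FhatB N Dm Dp (fun m => 1 - cP m) (fun m => 1 - cM m) αt Δx k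
      = - FhatB N Dm Dp cP cM αt Δx k := by
  simp only [FhatB, Fhat]
  split_ifs <;> ring

lemma rG_compl (Φ cP cM : ℕ → ℝ) (j : ℕ) (i : Fin 2) :
    rG Φ (fun m => 1 - cP m) (fun m => 1 - cM m) j i
      = phiG Φ j i - rG Φ cP cM j i := by
  fin_cases i <;> simp [rG, phiG] <;> ring

lemma cG_compl (cP cM : ℕ → ℝ) (j : ℕ) (i : Fin 2) :
    cG (fun m => 1 - cP m) (fun m => 1 - cM m) j i = 1 - cG cP cM j i := by
  fin_cases i <;> simp [cG, mu1, mu2] <;> ring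

lemma compl_eq (N : ℕ) (Δx Δt : ℝ) (hΔx : Δx ≠ 0)
    (Φ cP cM u Dm Dp : ℕ → ℝ) (q ct P : ℕ → Fin 2 → ℝ) (α αt z1 z2 : ℝ) (j : ℕ)
    (hpressj : (Δx / 2) * ∑ i : Fin 2,
        (z1 * rG Φ cP cM j i + z2 * (phiG Φ j i - rG Φ cP cM j i)) * P j i
      = uhatB N u (j - 1) - uhatB N u j + (Δx / 2) * ∑ i : Fin 2, q j i) :
    rbarnew N Φ (fun m => 1 - cP m) (fun m => 1 - cM m) u Dm Dp q
        (fun m i => 1 - ct m i) P α αt z2 Δx Δt j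
      = (Φ (j - 1) + Φ j) / 2 - rbarnew N Φ cP cM u Dm Dp q ct P α αt z1 Δx Δt j := by
  have e : Δt / 2 = (Δt / Δx) * (Δx / 2) := by field_simp
  have key : (Δt / 2) * ∑ i : Fin 2,
        (z1 * rG Φ cP cM j i + z2 * (phiG Φ j i - rG Φ cP cM j i)) * P j i
      = (Δt / Δx) * (uhatB N u (j - 1) - uhatB N u j)
        + (Δt / 2) * ∑ i : Fin 2, q j i := by
    calc (Δt / 2) * ∑ i : Fin 2,
          (z1 * rG Φ cP cM j i + z2 * (phiG Φ j i - rG Φ cP cM j i)) * P j i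
        = (Δt / Δx) * ((Δx / 2) * ∑ i : Fin 2,
            (z1 * rG Φ cP cM j i + z2 * (phiG Φ j i - rG Φ cP cM j i)) * P j i) := by
          rw [e]; ring
      _ = (Δt / Δx) * (uhatB N u (j - 1) - uhatB N u j
            + (Δx / 2) * ∑ i : Fin 2, q j i) := by rw [hpressj]
      _ = (Δt / Δx) * (uhatB N u (j - 1) - uhatB N u j)
            + (Δt / 2) * ∑ i : Fin 2, q j i := by rw [e]; ring
  rw [Fin.sum_univ_two, Fin.sum_univ_two] at key
  simp only [rbarnew, rbar, Fin.sum_univ_two, ucB_compl, FhatB_compl, rG_compl]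
  linear_combination (-1 : ℝ) * key
/-- Theorem 3.2 (1D, Euler forward): with `0 ≤ r ≤ Φ` nodally, a consistent flux pair and
the discrete pressure relation, the new cell averages satisfy `0 ≤ r̄_j^{new} ≤ Φ̄_j`. -/
theorem bound_preserving_cell_averages_1d
    (N : ℕ) (hN : 4 ≤ N) (Δx Δt : ℝ) (hΔx : 0 < Δx) (hΔt : 0 < Δt)
    (Φ cP cM u Dm Dp : ℕ → ℝ) (q ct P : ℕ → Fin 2 → ℝ) (α αt z1 z2 : ℝ)
    (hΦ : ∀ j, j ≤ N → 0 < Φ j)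
    (hDm : ∀ j, 1 ≤ j → j ≤ N - 1 → 0 ≤ Dm j)
    (hDp : ∀ j, 1 ≤ j → j ≤ N - 1 → 0 ≤ Dp j)
    -- (i) all nodal concentration values lie in [0,1]
    (hc : ∀ j, 1 ≤ j → j ≤ N →
      (0 ≤ cP j ∧ cP j ≤ 1) ∧ (0 ≤ cM j ∧ cM j ≤ 1))
    -- (ii)
    (hα : ∀ j, 1 ≤ j → j ≤ N - 1 → max (u j) 0 < α)
    -- (iii)
    (hαt : ∀ j, 1 ≤ j → j ≤ N - 1 → Dm j / 2 < αt ∧ Dp j / 2 < αt)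
    -- (iv)
    (hCFL1 : ∀ j, 1 ≤ j → j ≤ N - 1 → 6 * α * (Δt / Δx) ≤ Φ j)
    (hCFL2 : ∀ j, 1 ≤ j → j ≤ N - 1 → 6 * (Δt / Δx) * (α - u j) ≤ Φ j)
    -- (v)
    (hCFL3 : ∀ j, 1 ≤ j → j ≤ N - 1 → (Δt / Δx ^ 2) * (3 * Dm j + 6 * αt) ≤ Φ (j - 1))
    (hCFL4 : ∀ j, 2 ≤ j → j ≤ N → (Δt / Δx ^ 2) * (3 * Dp (j - 1) + 6 * αt) ≤ Φ j)
    (hCFL5 : ∀ j, j ≤ N → 6 * (Δt / Δx ^ 2) * αt ≤ Φ j)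
    -- (vi)
    (hz1 : 0 ≤ z1) (hz2 : 0 ≤ z2)
    (hP1 : ∀ j, 1 ≤ j → j ≤ N → ∀ i : Fin 2, 6 * Δt * z1 * max (P j i) 0 ≤ 1)
    (hP2 : ∀ j, 1 ≤ j → j ≤ N → ∀ i : Fin 2, 6 * Δt * z2 * max (P j i) 0 ≤ 1)
    (hct : ∀ j, 1 ≤ j → j ≤ N → ∀ i : Fin 2, 0 ≤ ct j i ∧ ct j i ≤ 1)
    (hq2 : ∀ j, 1 ≤ j → j ≤ N → ∀ i : Fin 2, q j i < 0 →
      ct j i = cG cP cM j i ∧ 6 * Δt * (-q j i) < min (Φ (j - 1)) (Φ j))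
    -- (vii) discrete pressure relation
    (hpress : ∀ j, 1 ≤ j → j ≤ N →
      (Δx / 2) * ∑ i : Fin 2,
          (z1 * rG Φ cP cM j i + z2 * (phiG Φ j i - rG Φ cP cM j i)) * P j i
        = uhatB N u (j - 1) - uhatB N u j + (Δx / 2) * ∑ i : Fin 2, q j i) :
    ∀ j, 1 ≤ j → j ≤ N →
      0 ≤ rbarnew N Φ cP cM u Dm Dp q ct P α αt z1 Δx Δt j ∧
      rbarnew N Φ cP cM u Dm Dp q ct P α αt z1 Δx Δt j ≤ (Φ (j - 1) + Φ j) / 2 := by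


  intro j hj1 hjN
  have hlow := lower_bound N hN Δx Δt hΔx hΔt Φ cP cM u Dm Dp q ct P α αt z1
    hΦ hDm hDp hc hα hαt hCFL1 hCFL2 hCFL3 hCFL4 hCFL5 hz1 hP1 hct hq2 j hj1 hjN
  refine ⟨hlow, ?_⟩
  have hc' : ∀ j, 1 ≤ j → j ≤ N →
      (0 ≤ (fun m => 1 - cP m) j ∧ (fun m => 1 - cP m) j ≤ 1) ∧
      (0 ≤ (fun m => 1 - cM m) j ∧ (fun m => 1 - cM m) j ≤ 1) := by
    intro j h1 h2
    obtain ⟨⟨a1, a2⟩, b1, b2⟩ := hc j h1 h2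
    exact ⟨⟨by simpa using a2, by simp; linarith⟩, ⟨by simpa using b2, by simp; linarith⟩⟩
  have hct' : ∀ j, 1 ≤ j → j ≤ N → ∀ i : Fin 2,
      0 ≤ (fun m i => 1 - ct m i) j i ∧ (fun m i => 1 - ct m i) j i ≤ 1 := by
    intro j h1 h2 i
    obtain ⟨a1, a2⟩ := hct j h1 h2 i
    exact ⟨by simpa using a2, by simp; linarith⟩
  have hq2' : ∀ j, 1 ≤ j → j ≤ N → ∀ i : Fin 2, q j i < 0 →
      (fun m i => 1 - ct m i) j i
        = cG (fun m => 1 - cP m) (fun m => 1 - cM m) j i ∧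
      6 * Δt * (-q j i) < min (Φ (j - 1)) (Φ j) := by
    intro j h1 h2 i hq
    obtain ⟨ha, hb⟩ := hq2 j h1 h2 i hq
    exact ⟨by simp only [cG_compl, ha], hb⟩
  have hup := lower_bound N hN Δx Δt hΔx hΔt Φ (fun m => 1 - cP m)
    (fun m => 1 - cM m) u Dm Dp q (fun m i => 1 - ct m i) P α αt z2
    hΦ hDm hDp hc' hα hαt hCFL1 hCFL2 hCFL3 hCFL4 hCFL5 hz2 hP2 hct' hq2' j hj1 hjN
  rw [compl_eq N Δx Δt (ne_of_gt hΔx) Φ cP cM u Dm Dp q ct P α αt z1 z2 j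
    (hpress j hj1 hjN)] at hup
  linarith

end DG1D
end
end

section
/- Assume every nodal concentration value is strictly positive (c⁺_{j−1/2} > 0 and c⁻_{j+1/2} > 0 for every cell j), that α > max{u⁺_{j+1/2}, 0} for every interior node 1 ≤ j ≤ N−1, that 6αλ ≤ Φ⁰_m := min over 2 ≤ j ≤ N−1 of Φ_{j+1/2}, and that 6λ(α − u⁺_{j−1/2}) ≤ Φ_{j−1/2} for every 2 ≤ j ≤ N−1. Then for every j with 2 ≤ j ≤ N−1 the convection part H_j^c := r̄_j/3 + λ(ûc_{j−1/2} − ûc_{j+1/2}) satisfies H_j^c > 0. -/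
noncomputable section

namespace DG1D

/-- Lemma 3.1 (1D): positivity of the convection part
`H_j^c = r̄_j/3 + λ(ûc_{j-1/2} - ûc_{j+1/2})` for interior cells `2 ≤ j ≤ N-1`. -/
theorem convection_part_positive_1d
    (N : ℕ) (hN : 4 ≤ N) (Δx Δt : ℝ) (hΔx : 0 < Δx) (hΔt : 0 < Δt)
    (Φ cP cM u : ℕ → ℝ) (α : ℝ)
    (hΦ : ∀ j, j ≤ N → 0 < Φ j)
    -- every nodal concentration value strictly positive
    (hc : ∀ j, 1 ≤ j → j ≤ N → 0 < cP j ∧ 0 < cM j)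
    -- α > max{u⁺_{j+1/2}, 0} at every interior node 1 ≤ j ≤ N-1
    (hα : ∀ j, 1 ≤ j → j ≤ N - 1 → max (u j) 0 < α)
    -- 6αλ ≤ Φ⁰_m = min over 2 ≤ j ≤ N-1 of Φ_{j+1/2}
    (hCFL1 : ∀ j, 2 ≤ j → j ≤ N - 1 → 6 * α * (Δt / Δx) ≤ Φ j)
    -- 6λ(α - u⁺_{j-1/2}) ≤ Φ_{j-1/2} for 2 ≤ j ≤ N-1
    (hCFL2 : ∀ j, 2 ≤ j → j ≤ N - 1 → 6 * (Δt / Δx) * (α - u (j - 1)) ≤ Φ (j - 1)) :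
    ∀ j, 2 ≤ j → j ≤ N - 1 →
      0 < rbar Φ cP cM j / 3
            + (Δt / Δx) * (uc u cP cM α (j - 1) - uc u cP cM α j) := by
  intro j hj2 hjN
  obtain ⟨k, rfl⟩ : ∃ k, j = k + 2 := ⟨j - 2, by omega⟩
  have hlam : 0 < Δt / Δx := div_pos hΔt hΔx
  have hmax := hα (k+2) (by omega) hjN
  have hαpos : 0 < α := lt_of_le_of_lt (le_max_right _ _) hmax
  have hαu : u (k+2) < α := lt_of_le_of_lt (le_max_left _ _) hmax
  have hb1 : 0 ≤ Φ (k+1) / 6 - (Δt/Δx) * (α - u (k+1)) := by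
    have := hCFL2 (k+2) (by omega) hjN
    norm_num at this
    linarith
  have hb2 : 0 ≤ Φ (k+2) / 6 - (Δt/Δx) * α := by
    have := hCFL1 (k+2) (by omega) hjN
    linarith
  have hcM1 : 0 < cM (k+1) := (hc (k+1) (by omega) (by omega)).2
  have hcP3 : 0 < cP (k+3) := (hc (k+3) (by omega) (by omega)).1
  have hcPj : 0 < cP (k+2) := (hc (k+2) (by omega) (by omega)).1
  have hcMj : 0 < cM (k+2) := (hc (k+2) (by omega) (by omega)).2
  have e1 : k + 2 - 1 = k + 1 := rfl
  simp only [rbar, uc, e1, Nat.add_sub_cancel]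
  nlinarith [mul_pos hlam (mul_pos (sub_pos.2 hαu) hcP3),
    mul_pos hlam (mul_pos hαpos hcM1),
    mul_nonneg hb1 hcPj.le, mul_nonneg hb2 hcMj.le]

end DG1D
end
end

section
/- Assume every nodal concentration value is strictly positive (c⁺_{j−1/2} > 0 and c⁻_{j+1/2} > 0 for every cell j), that α̃ > D⁰_M/2 where D⁰_M is the maximum over 2 ≤ j ≤ N−1 of the four values D⁻_{j−1/2}, D⁺_{j−1/2}, D⁻_{j+1/2}, D⁺_{j+1/2}, and that for every 2 ≤ j ≤ N−1 both Λ(3D⁻_{j+1/2} + 6α̃) ≤ Φ_{j−1/2} and Λ(3D⁺_{j−1/2} + 6α̃) ≤ Φ_{j+1/2} hold. Then for every j with 2 ≤ j ≤ N−1 the diffusion part H_j^d := r̄_j/3 − λ(F̂_{j−1/2} − F̂_{j+1/2}) satisfies H_j^d > 0. -/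
noncomputable section

namespace DG1D

/-- Lemma 3.2 (1D): positivity of the diffusion part
`H_j^d = r̄_j/3 - λ(F̂_{j-1/2} - F̂_{j+1/2})` for interior cells `2 ≤ j ≤ N-1`. -/
theorem diffusion_part_positive_1d
    (N : ℕ) (hN : 4 ≤ N) (Δx Δt : ℝ) (hΔx : 0 < Δx) (hΔt : 0 < Δt)
    (Φ cP cM Dm Dp : ℕ → ℝ) (αt : ℝ)
    (hΦ : ∀ j, j ≤ N → 0 < Φ j)
    (hDm : ∀ j, 1 ≤ j → j ≤ N - 1 → 0 ≤ Dm j)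
    (hDp : ∀ j, 1 ≤ j → j ≤ N - 1 → 0 ≤ Dp j)
    -- every nodal concentration value strictly positive
    (hc : ∀ j, 1 ≤ j → j ≤ N → 0 < cP j ∧ 0 < cM j)
    -- α̃ > D⁰_M/2, D⁰_M the max over 2 ≤ j ≤ N-1 of D∓_{j-1/2}, D∓_{j+1/2}
    (hαt : ∀ j, 2 ≤ j → j ≤ N - 1 →
      Dm (j - 1) / 2 < αt ∧ Dp (j - 1) / 2 < αt ∧ Dm j / 2 < αt ∧ Dp j / 2 < αt)
    -- Λ(3D⁻_{j+1/2} + 6α̃) ≤ Φ_{j-1/2} and Λ(3D⁺_{j-1/2} + 6α̃) ≤ Φ_{j+1/2}, 2 ≤ j ≤ N-1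
    (hCFL1 : ∀ j, 2 ≤ j → j ≤ N - 1 → (Δt / Δx ^ 2) * (3 * Dm j + 6 * αt) ≤ Φ (j - 1))
    (hCFL2 : ∀ j, 2 ≤ j → j ≤ N - 1 → (Δt / Δx ^ 2) * (3 * Dp (j - 1) + 6 * αt) ≤ Φ j) :
    ∀ j, 2 ≤ j → j ≤ N - 1 →
      0 < rbar Φ cP cM j / 3
            - (Δt / Δx) * (Fhat Dm Dp cP cM αt Δx (j - 1) - Fhat Dm Dp cP cM αt Δx j) := by
  intro j hj2 hjN
  obtain ⟨k, rfl⟩ : ∃ k, j = k + 2 := ⟨j - 2, by omega⟩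
  have hL : 0 < Δt / Δx ^ 2 := by positivity
  have hDm1 : 0 ≤ Dm (k + 1) := hDm (k + 1) (by omega) (by omega)
  have hDp1 : 0 ≤ Dp (k + 1) := hDp (k + 1) (by omega) (by omega)
  have hDm2 : 0 ≤ Dm (k + 2) := hDm (k + 2) (by omega) (by omega)
  have hDp2 : 0 ≤ Dp (k + 2) := hDp (k + 2) (by omega) (by omega)
  have hc1 := hc (k + 1) (by omega) (by omega)
  have hc2 := hc (k + 2) (by omega) (by omega)
  have hc3 := hc (k + 3) (by omega) (by omega)
  have hα := hαt (k + 2) (by omega) hjN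
  have hC1 := hCFL1 (k + 2) (by omega) hjN
  have hC2 := hCFL2 (k + 2) (by omega) hjN
  simp only [show k + 2 - 1 = k + 1 from rfl] at hα hC1 hC2 ⊢
  have hΔx' : Δx ≠ 0 := ne_of_gt hΔx
  have key : rbar Φ cP cM (k + 2) / 3
      - Δt / Δx * (Fhat Dm Dp cP cM αt Δx (k + 1) - Fhat Dm Dp cP cM αt Δx (k + 2)) =
      (Δt / Δx ^ 2) * (Dm (k + 1) / 2) * cP (k + 1)
      + (Δt / Δx ^ 2) * (αt - Dm (k + 1) / 2) * cM (k + 1)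
      + (Φ (k + 1) / 6 - (Δt / Δx ^ 2) * (Dm (k + 2) / 2 + αt)
          + (Δt / Δx ^ 2) * (Dp (k + 1) / 2)) * cP (k + 2)
      + (Φ (k + 2) / 6 - (Δt / Δx ^ 2) * (Dp (k + 1) / 2 + αt)
          + (Δt / Δx ^ 2) * (Dm (k + 2) / 2)) * cM (k + 2)
      + (Δt / Δx ^ 2) * (αt - Dp (k + 2) / 2) * cP (k + 3)
      + (Δt / Δx ^ 2) * (Dp (k + 2) / 2) * cM (k + 3) := by
    unfold rbar Fhat
    simp only [show k + 2 - 1 = k + 1 from rfl, show k + 1 - 1 = k from rfl,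
      show k + 1 + 1 = k + 2 from rfl, show k + 2 + 1 = k + 3 from rfl]
    field_simp
    ring
  rw [key]
  have t1 : 0 ≤ (Δt / Δx ^ 2) * (Dm (k + 1) / 2) * cP (k + 1) := by
    have := hc1.1; positivity
  have t2 : 0 < (Δt / Δx ^ 2) * (αt - Dm (k + 1) / 2) * cM (k + 1) := by
    apply mul_pos (mul_pos hL (by linarith [hα.1])) hc1.2
  have t3 : 0 ≤ (Φ (k + 1) / 6 - (Δt / Δx ^ 2) * (Dm (k + 2) / 2 + αt)
      + (Δt / Δx ^ 2) * (Dp (k + 1) / 2)) * cP (k + 2) := by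
    apply mul_nonneg _ hc2.1.le
    have h1 : 0 ≤ (Δt / Δx ^ 2) * (Dp (k + 1) / 2) := by positivity
    have h2 : (Δt / Δx ^ 2) * (3 * Dm (k + 2) + 6 * αt)
        = 6 * ((Δt / Δx ^ 2) * (Dm (k + 2) / 2 + αt)) := by ring
    linarith [hC1]
  have t4 : 0 ≤ (Φ (k + 2) / 6 - (Δt / Δx ^ 2) * (Dp (k + 1) / 2 + αt)
      + (Δt / Δx ^ 2) * (Dm (k + 2) / 2)) * cM (k + 2) := by
    apply mul_nonneg _ hc2.2.le
    have h1 : 0 ≤ (Δt / Δx ^ 2) * (Dm (k + 2) / 2) := by positivity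
    have h2 : (Δt / Δx ^ 2) * (3 * Dp (k + 1) + 6 * αt)
        = 6 * ((Δt / Δx ^ 2) * (Dp (k + 1) / 2 + αt)) := by ring
    linarith [hC2]
  have t5 : 0 ≤ (Δt / Δx ^ 2) * (αt - Dp (k + 2) / 2) * cP (k + 3) := by
    apply mul_nonneg (mul_nonneg hL.le (by linarith [hα.2.2.2])) hc3.1.le
  have t6 : 0 ≤ (Δt / Δx ^ 2) * (Dp (k + 2) / 2) * cM (k + 3) := by
    have := hc3.2; positivity
  linarith

end DG1D
end
end

section
/- Assume every nodal concentration value is strictly positive (c⁺_{j−1/2} > 0 and c⁻_{j+1/2} > 0 for every cell j), z₁ ≥ 0, and that for every cell j = 1,…,N and every Gauss index i ∈ {1,2}: 6Δt·z₁·max{P_j^i, 0} ≤ 1; if q_j^i ≥ 0 then c̃_j^i ≥ 0; and if q_j^i < 0 then c̃_j^i = c(x_j^i) and 6Δt(−q_j^i) < min{Φ_{j−1/2}, Φ_{j+1/2}}. Then the source part H_j^s := r̄_j/3 + (Δt/2)·∑_{i=1,2}(c̃_j^i·q_j^i − z₁·r(x_j^i)·P_j^i) satisfies H_j^s > 0 for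 every cell j = 1,…,N. -/
noncomputable section

namespace DG1D

/-- Lemma 3.3 (1D): positivity of the source part
`H_j^s = r̄_j/3 + (Δt/2)·∑_{i=1,2}(c̃_j^i·q_j^i - z₁·r(x_j^i)·P_j^i)` for every cell. -/
theorem source_part_positive_1d
    (N : ℕ) (hN : 4 ≤ N) (Δx Δt : ℝ) (hΔx : 0 < Δx) (hΔt : 0 < Δt)
    (Φ cP cM : ℕ → ℝ) (q ct P : ℕ → Fin 2 → ℝ) (z1 : ℝ)
    (hΦ : ∀ j, j ≤ N → 0 < Φ j)
    -- every nodal concentration value strictly positive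
    (hc : ∀ j, 1 ≤ j → j ≤ N → 0 < cP j ∧ 0 < cM j)
    (hz1 : 0 ≤ z1)
    (hP : ∀ j, 1 ≤ j → j ≤ N → ∀ i : Fin 2, 6 * Δt * z1 * max (P j i) 0 ≤ 1)
    (hq1 : ∀ j, 1 ≤ j → j ≤ N → ∀ i : Fin 2, 0 ≤ q j i → 0 ≤ ct j i)
    (hq2 : ∀ j, 1 ≤ j → j ≤ N → ∀ i : Fin 2, q j i < 0 →
      ct j i = cG cP cM j i ∧ 6 * Δt * (-q j i) < min (Φ (j - 1)) (Φ j)) :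
    ∀ j, 1 ≤ j → j ≤ N →
      0 < rbar Φ cP cM j / 3
            + (Δt / 2) * ∑ i : Fin 2, (ct j i * q j i - z1 * rG Φ cP cM j i * P j i) := by
  intro j hj1 hjN
  have hs3 : Real.sqrt 3 < 3 := by
    nlinarith [Real.sq_sqrt (show (0:ℝ) ≤ 3 by norm_num), Real.sqrt_nonneg 3]
  have hs0 : (0:ℝ) ≤ Real.sqrt 3 := Real.sqrt_nonneg 3
  have hmu1 : 0 < mu1 := by unfold mu1; linarith
  have hmu2 : 0 < mu2 := by unfold mu2; linarith
  have hΦl : 0 < Φ (j - 1) := hΦ _ (le_trans (Nat.sub_le _ _) hjN)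
  have hΦr : 0 < Φ j := hΦ _ hjN
  obtain ⟨hcP, hcM⟩ := hc j hj1 hjN
  set m : ℝ := min (Φ (j - 1)) (Φ j) with hm
  have hml : m ≤ Φ (j - 1) := min_le_left _ _
  have hmr : m ≤ Φ j := min_le_right _ _
  have hm0 : 0 < m := lt_min hΦl hΦr
  have key : ∀ i : Fin 2, 0 < rG Φ cP cM j i / 6
      + (Δt / 2) * (ct j i * q j i - z1 * rG Φ cP cM j i * P j i) := by
    intro i
    have hR : 0 < rG Φ cP cM j i := by
      fin_cases i <;> simp [rG] <;> positivity
    have hC : 0 < cG cP cM j i := by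
      fin_cases i <;> simp [cG] <;> positivity
    have hmC : m * cG cP cM j i ≤ rG Φ cP cM j i := by
      fin_cases i <;> simp [rG, cG] <;> nlinarith [mul_pos hmu1 hcP, mul_pos hmu2 hcM,
        mul_pos hmu2 hcP, mul_pos hmu1 hcM]
    -- pressure term bound : Δt * z1 * P * R ≤ R/6
    have hPi := hP j hj1 hjN i
    have hmaxP : P j i ≤ max (P j i) 0 := le_max_left _ _
    have hmax0 : (0:ℝ) ≤ max (P j i) 0 := le_max_right _ _
    have hB : Δt * (z1 * P j i) * rG Φ cP cM j i ≤ rG Φ cP cM j i / 6 := by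
      have h1 : Δt * (z1 * P j i) ≤ Δt * (z1 * max (P j i) 0) := by
        have := mul_le_mul_of_nonneg_left hmaxP hz1
        nlinarith
      nlinarith [mul_le_mul_of_nonneg_right h1 hR.le,
        mul_le_mul_of_nonneg_right hPi hR.le]
    rcases lt_or_ge (q j i) 0 with hq | hq
    · obtain ⟨hct, hqm⟩ := hq2 j hj1 hjN i hq
      rw [hct]
      -- (Δt/2) * C * (-q) < m*C/12 ≤ R/12
      have h2 : 6 * Δt * (-q j i) * cG cP cM j i < m * cG cP cM j i :=
        mul_lt_mul_of_pos_right hqm hC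
      nlinarith
    · have hct := hq1 j hj1 hjN i hq
      have h3 : 0 ≤ ct j i * q j i := mul_nonneg hct hq
      nlinarith
  have h0 := key 0
  have h1 := key 1
  have hsum : mu1 + mu2 = 1 := by unfold mu1 mu2; ring
  rw [Fin.sum_univ_two]
  have e0 : rG Φ cP cM j 0 = mu1 * (cP j * Φ (j - 1)) + mu2 * (cM j * Φ j) := by
    simp [rG]
  have e1 : rG Φ cP cM j 1 = mu2 * (cP j * Φ (j - 1)) + mu1 * (cM j * Φ j) := by
    simp [rG]
  have hr : rbar Φ cP cM j / 3 = rG Φ cP cM j 0 / 6 + rG Φ cP cM j 1 / 6 := by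
    rw [e0, e1, rbar]; linear_combination (-(cP j * Φ (j - 1) + cM j * Φ j) / 6) * hsum
  rw [hr]
  linarith [h0, h1]

end DG1D
end
end

section
/- Consider the first cell j = 1, whose Euler-forward cell-average update (using the boundary conventions) is r̄_1^{new} = r̄_1 − λ·ûc_{3/2} + λ·F̂_{3/2} + (Δt/2)·∑_{i=1,2}(c̃_1^i·q_1^i − z₁·r(x_1^i)·P_1^i). Assume all nodal concentration values are strictly positive; z₁ ≥ 0 and for i ∈ {1,2}: 6Δt·z₁·max{P_1^i,0} ≤ 1, if q_1^i ≥ 0 then c̃_1^i ≥ 0, and if q_1^i < 0 then c̃_1^i = c(x_1^i) and 6Δt(−q_1^i) < min{Φ_{1/2}, Φ_{3/2}}; and moreover α > max{u⁺_{3/2}, 0}, 6αλ ≤ Φ_{3/2}, α̃ > D⁺_{3/2}/2, 3Λ·D⁻_{3/2} ≤ Φ_{1/2}, and 6Λα̃ ≤ Φ_{3/2}. Then r̄_1^{new} > 0. -/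
noncomputable section

namespace DG1D

/-- Auxiliary: positivity of one Gauss-point source term. -/
lemma key_src (Φ0 Φ1 a b m1 m2 Δt z1 P q c : ℝ)
    (hΦ0 : 0 < Φ0) (hΦ1 : 0 < Φ1) (ha : 0 < a) (hb : 0 < b)
    (hm1 : 0 < m1) (hm2 : 0 < m2) (hz1 : 0 ≤ z1) (hΔt : 0 < Δt)
    (hP : 6 * Δt * z1 * max P 0 ≤ 1)
    (hq1 : 0 ≤ q → 0 ≤ c)
    (hq2 : q < 0 → c = m1 * a + m2 * b ∧ 6 * Δt * (-q) < min Φ0 Φ1) :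
    0 < (1/6) * (m1 * (a * Φ0) + m2 * (b * Φ1))
        - (Δt/2) * (z1 * (m1 * (a * Φ0) + m2 * (b * Φ1)) * P)
        + (Δt/2) * (c * q) := by
  set R := m1 * (a * Φ0) + m2 * (b * Φ1) with hR
  have hRpos : 0 < R := by positivity
  have hfac : Δt * z1 * P ≤ 1/6 := by
    rcases le_or_gt P 0 with h | h
    · nlinarith [mul_nonneg (mul_nonneg hΔt.le hz1) (neg_nonneg.2 h)]
    · rw [max_eq_left h.le] at hP; linarith
  have hmain : (1/12) * R ≤ (1/6) * R - (Δt/2) * (z1 * R * P) := by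
    nlinarith [mul_le_mul_of_nonneg_left hfac hRpos.le]
  rcases le_or_gt 0 q with h | h
  · have hcn := hq1 h
    nlinarith [mul_nonneg (mul_nonneg hΔt.le hcn) h]
  · obtain ⟨hceq, hmin⟩ := hq2 h
    subst hceq
    set m := min Φ0 Φ1 with hmm
    have hm0 : 0 < m := lt_min hΦ0 hΦ1
    have hRm : m * (m1 * a + m2 * b) ≤ R := by
      have h1 : m ≤ Φ0 := min_le_left _ _
      have h2 : m ≤ Φ1 := min_le_right _ _
      nlinarith [mul_nonneg hm1.le ha.le, mul_nonneg hm2.le hb.le]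
    have hcG : 0 < m1 * a + m2 * b := by positivity
    nlinarith [mul_lt_mul_of_pos_left hmin hcG]

/-- Lemma 3.4, first cell (1D): positivity of
`r̄_1^{new} = r̄_1 - λ·ûc_{3/2} + λ·F̂_{3/2} + (Δt/2)·∑_{i=1,2}(c̃_1^i·q_1^i - z₁·r(x_1^i)·P_1^i)`. -/
theorem first_cell_average_positive_1d
    (N : ℕ) (hN : 4 ≤ N) (Δx Δt : ℝ) (hΔx : 0 < Δx) (hΔt : 0 < Δt)
    (Φ cP cM u Dm Dp : ℕ → ℝ) (q ct P : ℕ → Fin 2 → ℝ) (α αt z1 : ℝ)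
    (hΦ : ∀ j, j ≤ N → 0 < Φ j)
    (hDm : ∀ j, 1 ≤ j → j ≤ N - 1 → 0 ≤ Dm j)
    (hDp : ∀ j, 1 ≤ j → j ≤ N - 1 → 0 ≤ Dp j)
    -- all nodal concentration values strictly positive
    (hc : ∀ j, 1 ≤ j → j ≤ N → 0 < cP j ∧ 0 < cM j)
    -- source conditions for cell 1
    (hz1 : 0 ≤ z1)
    (hP : ∀ i : Fin 2, 6 * Δt * z1 * max (P 1 i) 0 ≤ 1)
    (hq1 : ∀ i : Fin 2, 0 ≤ q 1 i → 0 ≤ ct 1 i)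
    (hq2 : ∀ i : Fin 2, q 1 i < 0 →
      ct 1 i = cG cP cM 1 i ∧ 6 * Δt * (-q 1 i) < min (Φ 0) (Φ 1))
    -- α > max{u⁺_{3/2}, 0}, 6αλ ≤ Φ_{3/2}
    (hα : max (u 1) 0 < α)
    (hCFL1 : 6 * α * (Δt / Δx) ≤ Φ 1)
    -- α̃ > D⁺_{3/2}/2, 3Λ·D⁻_{3/2} ≤ Φ_{1/2}, 6Λα̃ ≤ Φ_{3/2}
    (hαt : Dp 1 / 2 < αt)
    (hCFL2 : 3 * (Δt / Δx ^ 2) * Dm 1 ≤ Φ 0)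
    (hCFL3 : 6 * (Δt / Δx ^ 2) * αt ≤ Φ 1) :
    0 < rbar Φ cP cM 1
          - (Δt / Δx) * uc u cP cM α 1
          + (Δt / Δx) * Fhat Dm Dp cP cM αt Δx 1
          + (Δt / 2) * ∑ i : Fin 2, (ct 1 i * q 1 i - z1 * rG Φ cP cM 1 i * P 1 i) := by
  have hs3 : (0:ℝ) < Real.sqrt 3 := Real.sqrt_pos.2 (by norm_num)
  have hs3' : Real.sqrt 3 < 3 := by
    nlinarith [Real.sq_sqrt (show (0:ℝ) ≤ 3 by norm_num)]
  have hmu1 : 0 < mu1 := by unfold mu1; linarith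
  have hmu2 : 0 < mu2 := by unfold mu2; linarith
  have hΦ0 : 0 < Φ 0 := hΦ 0 (by omega)
  have hΦ1 : 0 < Φ 1 := hΦ 1 (by omega)
  obtain ⟨ha, hb⟩ := hc 1 le_rfl (by omega)
  obtain ⟨hd, he⟩ := hc 2 (by omega) (by omega)
  have hDm1 : 0 ≤ Dm 1 := hDm 1 le_rfl (by omega)
  have hDp1 : 0 ≤ Dp 1 := hDp 1 le_rfl (by omega)
  have hlam : 0 < Δt / Δx := div_pos hΔt hΔx
  have hΛ : 0 < Δt / Δx ^ 2 := div_pos hΔt (by positivity)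
  have hu1 : u 1 < α := lt_of_le_of_lt (le_max_left _ _) hα
  have hα0 : 0 < α := lt_of_le_of_lt (le_max_right _ _) hα
  -- source terms at the two Gauss points
  have hsrc0 := key_src (Φ 0) (Φ 1) (cP 1) (cM 1) mu1 mu2 Δt z1 (P 1 0) (q 1 0) (ct 1 0)
    hΦ0 hΦ1 ha hb hmu1 hmu2 hz1 hΔt (hP 0) (hq1 0)
    (fun h => by
      obtain ⟨h1, h2⟩ := hq2 0 h
      refine ⟨?_, h2⟩
      simpa [cG] using h1)
  have hsrc1 := key_src (Φ 0) (Φ 1) (cP 1) (cM 1) mu2 mu1 Δt z1 (P 1 1) (q 1 1) (ct 1 1)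
    hΦ0 hΦ1 ha hb hmu2 hmu1 hz1 hΔt (hP 1) (hq1 1)
    (fun h => by
      obtain ⟨h1, h2⟩ := hq2 1 h
      refine ⟨?_, h2⟩
      simpa [cG] using h1)
  -- convection part
  have hC : 0 ≤ (1/6) * (cP 1 * Φ 0 + cM 1 * Φ 1)
      - (Δt / Δx) * (u 1 * cP 2 - α * (cP 2 - cM 1)) := by
    nlinarith [mul_nonneg hb.le (sub_nonneg.2 hCFL1),
      mul_pos (mul_pos hlam (sub_pos.2 hu1)) hd, mul_pos ha hΦ0]
  -- diffusion part
  have hrw : (Δt / Δx) * Fhat Dm Dp cP cM αt Δx 1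
      = (Δt / Δx ^ 2) * ((Dm 1 * (cM 1 - cP 1) + Dp 1 * (cM 2 - cP 2)) / 2
          + αt * (cP 2 - cM 1)) := by
    unfold Fhat
    field_simp
  have hD : 0 ≤ (1/6) * (cP 1 * Φ 0 + cM 1 * Φ 1)
      + (Δt / Δx ^ 2) * ((Dm 1 * (cM 1 - cP 1) + Dp 1 * (cM 2 - cP 2)) / 2
          + αt * (cP 2 - cM 1)) := by
    have h1 : 0 ≤ cP 1 * (Φ 0 - 3 * (Δt / Δx ^ 2) * Dm 1) :=
      mul_nonneg ha.le (by linarith)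
    have h2 : 0 ≤ cM 1 * (Φ 1 - 6 * (Δt / Δx ^ 2) * αt) :=
      mul_nonneg hb.le (by linarith)
    have h3 : 0 ≤ cM 1 * ((Δt / Δx ^ 2) * Dm 1) :=
      mul_nonneg hb.le (mul_nonneg hΛ.le hDm1)
    have h4 : 0 ≤ cM 2 * ((Δt / Δx ^ 2) * Dp 1) :=
      mul_nonneg he.le (mul_nonneg hΛ.le hDp1)
    have h5 : 0 ≤ cP 2 * ((Δt / Δx ^ 2) * (2 * αt - Dp 1)) :=
      mul_nonneg hd.le (mul_nonneg hΛ.le (by linarith))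
    linarith [h1, h2, h3, h4, h5]
  rw [hrw]
  simp only [mu1, mu2] at hsrc0 hsrc1
  norm_num [rbar, uc, rG, mu1, mu2, Fin.sum_univ_two]
  linarith [hsrc0, hsrc1, hC, hD]

end DG1D
end
end

section
/- Consider the last cell j = N, whose Euler-forward cell-average update (using the boundary conventions) is r̄_N^{new} = r̄_N + λ·ûc_{N−1/2} − λ·F̂_{N−1/2} + (Δt/2)·∑_{i=1,2}(c̃_N^i·q_N^i − z₁·r(x_N^i)·P_N^i). Assume all nodal concentration values are strictly positive; z₁ ≥ 0 and for i ∈ {1,2}: 6Δt·z₁·max{P_N^i,0} ≤ 1, if q_N^i ≥ 0 then c̃_N^i ≥ 0, and if q_N^i < 0 then c̃_N^i = c(x_N^i) and 6Δt(−q_N^i) < min{Φ_{N−1/2}, Φ_{N+1/2}}; and moreover α > 0, 6λ(α − u⁺_{N−1/2}) ≤ Φ_{N−1/2}, α̃ > D⁻_{N−1/2}/2, 6Λα̃ ≤ Φ_{N−1/2}, and 3Λ·D⁺_{N−1/2} ≤ Φ_{N+1/2}. Then r̄_N^{new} > 0. -/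
noncomputable section

namespace DG1D

/-- Positivity of a single Gauss-point source term together with one sixth of the
corresponding `r`-value. -/
lemma src_pos (Δt rg cg ctv qv Pv z1 Φ1 Φ2 : ℝ) (hΔt : 0 < Δt)
    (hrg : 0 < rg) (hcg : 0 < cg) (hΦ1 : 0 < Φ1) (hΦ2 : 0 < Φ2)
    (hlo : min Φ1 Φ2 * cg ≤ rg)
    (hz1 : 0 ≤ z1) (hP : 6 * Δt * z1 * max Pv 0 ≤ 1)
    (hq1 : 0 ≤ qv → 0 ≤ ctv)
    (hq2 : qv < 0 → ctv = cg ∧ 6 * Δt * (-qv) < min Φ1 Φ2) :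
    0 < (1/6) * rg + (Δt/2) * (ctv * qv - z1 * rg * Pv) := by
  have h1 : z1 * Pv ≤ z1 * max Pv 0 := mul_le_mul_of_nonneg_left (le_max_left _ _) hz1
  have hzP : Δt * (z1 * Pv) ≤ 1/6 := by
    nlinarith [mul_le_mul_of_nonneg_left h1 hΔt.le]
  have h2 : (Δt/2) * (z1 * rg * Pv) ≤ rg/12 := by
    nlinarith [mul_le_mul_of_nonneg_right hzP hrg.le]
  rcases le_or_gt 0 qv with hq | hq
  · have hct := hq1 hq
    nlinarith [mul_nonneg hct hq]
  · obtain ⟨hct, hmin⟩ := hq2 hq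
    subst hct
    have hminpos : 0 < min Φ1 Φ2 := lt_min hΦ1 hΦ2
    nlinarith [mul_lt_mul_of_pos_left hmin hcg]

/-- Convection estimate. -/
lemma conv_pos (lam α uN a b m Φm Φp : ℝ) (hlam : 0 < lam) (hα : 0 < α)
    (ha : 0 < a) (hb : 0 < b) (hm : 0 < m) (hΦp : 0 < Φp)
    (hCFL : 6 * lam * (α - uN) ≤ Φm) :
    0 < (1/6) * (a * Φm + b * Φp) + lam * (uN * a - α * (a - m)) := by
  nlinarith [mul_le_mul_of_nonneg_right hCFL ha.le,
    mul_pos (mul_pos hlam hα) hm, mul_pos hb hΦp]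

/-- Diffusion estimate. -/
lemma diff_nonneg (Lam αt D1 D2 a b p m Φm Φp : ℝ) (hLam : 0 < Lam)
    (ha : 0 < a) (hb : 0 < b) (hp : 0 < p) (hm : 0 < m)
    (hD1 : 0 ≤ D1) (hD2 : 0 ≤ D2) (hαt : D1 / 2 < αt)
    (h2 : 6 * Lam * αt ≤ Φm) (h3 : 3 * Lam * D2 ≤ Φp) :
    0 ≤ (1/6) * (a * Φm + b * Φp)
      - Lam * (D1 * (m - p) / 2 + D2 * (b - a) / 2 + αt * (a - m)) := by
  nlinarith [mul_le_mul_of_nonneg_right h2 ha.le,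
    mul_le_mul_of_nonneg_right h3 hb.le,
    mul_nonneg (mul_nonneg hLam.le (by linarith : (0:ℝ) ≤ D1 / 2)) hp.le,
    mul_nonneg (mul_nonneg hLam.le (by linarith : (0:ℝ) ≤ αt - D1 / 2)) hm.le,
    mul_nonneg (mul_nonneg hLam.le (by linarith : (0:ℝ) ≤ D2 / 2)) ha.le]

/-- Lower bound for a Gauss value of `r` by the Gauss value of `c`. -/
lemma lo_aux (x y Φm Φp mn : ℝ) (hx : 0 ≤ x) (hy : 0 ≤ y)
    (h1 : mn ≤ Φm) (h2 : mn ≤ Φp) : mn * (x + y) ≤ x * Φm + y * Φp := by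
  nlinarith [mul_le_mul_of_nonneg_left h1 hx, mul_le_mul_of_nonneg_left h2 hy]

/-- Lemma 3.4, last cell (1D): positivity of
`r̄_N^{new} = r̄_N + λ·ûc_{N-1/2} - λ·F̂_{N-1/2} + (Δt/2)·∑_{i=1,2}(c̃_N^i·q_N^i - z₁·r(x_N^i)·P_N^i)`. -/
theorem last_cell_average_positive_1d
    (N : ℕ) (hN : 4 ≤ N) (Δx Δt : ℝ) (hΔx : 0 < Δx) (hΔt : 0 < Δt)
    (Φ cP cM u Dm Dp : ℕ → ℝ) (q ct P : ℕ → Fin 2 → ℝ) (α αt z1 : ℝ)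
    (hΦ : ∀ j, j ≤ N → 0 < Φ j)
    (hDm : ∀ j, 1 ≤ j → j ≤ N - 1 → 0 ≤ Dm j)
    (hDp : ∀ j, 1 ≤ j → j ≤ N - 1 → 0 ≤ Dp j)
    -- all nodal concentration values strictly positive
    (hc : ∀ j, 1 ≤ j → j ≤ N → 0 < cP j ∧ 0 < cM j)
    -- source conditions for cell N
    (hz1 : 0 ≤ z1)
    (hP : ∀ i : Fin 2, 6 * Δt * z1 * max (P N i) 0 ≤ 1)
    (hq1 : ∀ i : Fin 2, 0 ≤ q N i → 0 ≤ ct N i)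
    (hq2 : ∀ i : Fin 2, q N i < 0 →
      ct N i = cG cP cM N i ∧ 6 * Δt * (-q N i) < min (Φ (N - 1)) (Φ N))
    -- α > 0 and 6λ(α - u⁺_{N-1/2}) ≤ Φ_{N-1/2}
    (hα : 0 < α)
    (hCFL1 : 6 * (Δt / Δx) * (α - u (N - 1)) ≤ Φ (N - 1))
    -- α̃ > D⁻_{N-1/2}/2, 6Λα̃ ≤ Φ_{N-1/2}, 3Λ·D⁺_{N-1/2} ≤ Φ_{N+1/2}
    (hαt : Dm (N - 1) / 2 < αt)
    (hCFL2 : 6 * (Δt / Δx ^ 2) * αt ≤ Φ (N - 1))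
    (hCFL3 : 3 * (Δt / Δx ^ 2) * Dp (N - 1) ≤ Φ N) :
    0 < rbar Φ cP cM N
          + (Δt / Δx) * uc u cP cM α (N - 1)
          - (Δt / Δx) * Fhat Dm Dp cP cM αt Δx (N - 1)
          + (Δt / 2) * ∑ i : Fin 2, (ct N i * q N i - z1 * rG Φ cP cM N i * P N i) := by
  have hs3 : (0:ℝ) ≤ Real.sqrt 3 := Real.sqrt_nonneg 3
  have hs3sq : Real.sqrt 3 ^ 2 = 3 := Real.sq_sqrt (by norm_num)
  have hmu1 : 0 < mu1 := by unfold mu1; nlinarith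
  have hmu2 : 0 < mu2 := by unfold mu2; nlinarith
  have hNk : N - 1 + 1 = N := by omega
  have hN1le : 1 ≤ N - 1 := by omega
  have hN1leN : N - 1 ≤ N := by omega
  obtain ⟨ha, hb⟩ := hc N (by omega) le_rfl
  obtain ⟨hp, hm⟩ := hc (N-1) hN1le hN1leN
  have hΦm := hΦ (N-1) hN1leN
  have hΦp := hΦ N le_rfl
  have hD1 := hDm (N-1) hN1le le_rfl
  have hD2 := hDp (N-1) hN1le le_rfl
  have hlam : 0 < Δt / Δx := div_pos hΔt hΔx
  have hLam : 0 < Δt / Δx ^ 2 := div_pos hΔt (by positivity)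
  -- the two Gauss values
  have hrg0 : rG Φ cP cM N 0 = mu1 * ((cP N) * Φ (N-1)) + mu2 * ((cM N) * Φ N) := by
    simp [rG]
  have hrg1 : rG Φ cP cM N 1 = mu2 * ((cP N) * Φ (N-1)) + mu1 * ((cM N) * Φ N) := by
    simp [rG]
  have hcg0 : cG cP cM N 0 = mu1 * (cP N) + mu2 * (cM N) := by simp [cG]
  have hcg1 : cG cP cM N 1 = mu2 * (cP N) + mu1 * (cM N) := by simp [cG]
  have hrg0pos : 0 < mu1 * ((cP N) * Φ (N-1)) + mu2 * ((cM N) * Φ N) :=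
    add_pos (mul_pos hmu1 (mul_pos ha hΦm)) (mul_pos hmu2 (mul_pos hb hΦp))
  have hrg1pos : 0 < mu2 * ((cP N) * Φ (N-1)) + mu1 * ((cM N) * Φ N) :=
    add_pos (mul_pos hmu2 (mul_pos ha hΦm)) (mul_pos hmu1 (mul_pos hb hΦp))
  have hcg0pos : 0 < mu1 * (cP N) + mu2 * (cM N) :=
    add_pos (mul_pos hmu1 ha) (mul_pos hmu2 hb)
  have hcg1pos : 0 < mu2 * (cP N) + mu1 * (cM N) :=
    add_pos (mul_pos hmu2 ha) (mul_pos hmu1 hb)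
  have hminposm : min (Φ (N-1)) (Φ N) ≤ Φ (N-1) := min_le_left _ _
  have hminposp : min (Φ (N-1)) (Φ N) ≤ Φ N := min_le_right _ _
  have hlo0 : min (Φ (N-1)) (Φ N) * (mu1 * (cP N) + mu2 * (cM N))
      ≤ mu1 * ((cP N) * Φ (N-1)) + mu2 * ((cM N) * Φ N) := by
    have := lo_aux (mu1 * (cP N)) (mu2 * (cM N)) (Φ (N-1)) (Φ N) (min (Φ (N-1)) (Φ N))
      (mul_pos hmu1 ha).le (mul_pos hmu2 hb).le hminposm hminposp
    linarith
  have hlo1 : min (Φ (N-1)) (Φ N) * (mu2 * (cP N) + mu1 * (cM N))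
      ≤ mu2 * ((cP N) * Φ (N-1)) + mu1 * ((cM N) * Φ N) := by
    have := lo_aux (mu2 * (cP N)) (mu1 * (cM N)) (Φ (N-1)) (Φ N) (min (Φ (N-1)) (Φ N))
      (mul_pos hmu2 ha).le (mul_pos hmu1 hb).le hminposm hminposp
    linarith
  -- source terms
  have hT1a : 0 < (1/6) * (mu1 * ((cP N) * Φ (N-1)) + mu2 * ((cM N) * Φ N))
      + (Δt/2) * (ct N 0 * q N 0 - z1 * (mu1 * ((cP N) * Φ (N-1)) + mu2 * ((cM N) * Φ N)) * P N 0) := by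
    refine src_pos Δt _ (mu1 * (cP N) + mu2 * (cM N)) (ct N 0) (q N 0) (P N 0) z1 (Φ (N-1)) (Φ N)
      hΔt hrg0pos hcg0pos hΦm hΦp hlo0 hz1 (hP 0) (hq1 0) ?_
    intro hq
    have h := hq2 0 hq
    rw [hcg0] at h
    exact h
  have hT1b : 0 < (1/6) * (mu2 * ((cP N) * Φ (N-1)) + mu1 * ((cM N) * Φ N))
      + (Δt/2) * (ct N 1 * q N 1 - z1 * (mu2 * ((cP N) * Φ (N-1)) + mu1 * ((cM N) * Φ N)) * P N 1) := by
    refine src_pos Δt _ (mu2 * (cP N) + mu1 * (cM N)) (ct N 1) (q N 1) (P N 1) z1 (Φ (N-1)) (Φ N)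
      hΔt hrg1pos hcg1pos hΦm hΦp hlo1 hz1 (hP 1) (hq1 1) ?_
    intro hq
    have h := hq2 1 hq
    rw [hcg1] at h
    exact h
  -- convection term
  have hT2 : 0 < (1/6) * ((cP N) * Φ (N-1) + (cM N) * Φ N)
      + (Δt / Δx) * (u (N-1) * (cP N) - α * ((cP N) - (cM (N-1)))) := by
    exact conv_pos (Δt / Δx) α (u (N-1)) (cP N) (cM N) (cM (N-1)) (Φ (N-1)) (Φ N)
      hlam hα ha hb hm hΦp hCFL1
  -- diffusion term
  have hT3 : 0 ≤ (1/6) * ((cP N) * Φ (N-1) + (cM N) * Φ N)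
      - (Δt / Δx) * ((Dm (N-1) * (((cM (N-1)) - (cP (N-1))) / Δx) + Dp (N-1) * (((cM N) - (cP N)) / Δx)) / 2
        + (αt / Δx) * ((cP N) - (cM (N-1)))) := by
    have key : (Δt / Δx) * ((Dm (N-1) * (((cM (N-1)) - (cP (N-1))) / Δx) + Dp (N-1) * (((cM N) - (cP N)) / Δx)) / 2
        + (αt / Δx) * ((cP N) - (cM (N-1))))
        = (Δt / Δx ^ 2) * (Dm (N-1) * ((cM (N-1)) - (cP (N-1))) / 2 + Dp (N-1) * ((cM N) - (cP N)) / 2 + αt * ((cP N) - (cM (N-1)))) := by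
      field_simp
    rw [key]
    exact diff_nonneg (Δt / Δx ^ 2) αt (Dm (N-1)) (Dp (N-1)) (cP N) (cM N) (cP (N-1))
      (cM (N-1)) (Φ (N-1)) (Φ N) hLam ha hb hp hm hD1 hD2 hαt hCFL2 hCFL3
  -- assemble
  have hsum : mu1 * ((cP N) * Φ (N-1)) + mu2 * ((cM N) * Φ N)
      + (mu2 * ((cP N) * Φ (N-1)) + mu1 * ((cM N) * Φ N)) = (cP N) * Φ (N-1) + (cM N) * Φ N := by
    unfold mu1 mu2; ring
  simp only [rbar, uc, Fhat, Fin.sum_univ_two, hrg0, hrg1, hNk]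
  linarith [hT1a, hT1b, hT2, hT3, hsum]

end DG1D
end
end

section
/- Define the complementary data cornerwise/nodally by c₂ = 1 − c (i.e. c₂⁺_{j−1/2} = 1 − c⁺_{j−1/2}, c₂⁻_{j+1/2} = 1 − c⁻_{j+1/2}), r₂ = Φ − r at every node, c̃₂_j^i = 1 − c̃_j^i, and let r̄₂_j^{new} denote the Euler-forward cell-average update computed from the data (c₂, r₂, z₂, c̃₂) with the same velocity traces u⁺, diffusion values D^±, parameters α, α̃, flow rates q_j^i and pressure values P_j^i. Suppose the discrete pressure relation holds for every cell j = 1,…,N: (Δx/2)·∑_{i=1,2}(z₁·r(x_j^i) + z₂·(Φ(x_j^i) − r(x_j^i)))·P_j^i = û_{j−1/2} − û_{j+1/2} + (Δx/2)·∑_{i=1,2} q_j^i, where û_{j+1/2} = u⁺_{j+1/2} for 1 ≤ j ≤ N−1, û_{1/2} = û_{N+1/2} = 0, and Φ(x_j^1) = μ₁Φ_{j−1/2} + μ₂Φ_{j+1/2}, Φ(x_j^2) = μ₂Φ_{j−1/2} + μ₁Φ_{j+1/2}. Then for every cell j = 1,…,N one has the exact identity r̄_j^{new} + r̄₂_j^{new}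 = Φ̄_j := (Φ_{j−1/2} + Φ_{j+1/2})/2. -/
noncomputable section

namespace DG1D

lemma ucB_comp (N : ℕ) (u cP cM : ℕ → ℝ) (α : ℝ) (j : ℕ) :
    ucB N u (fun k => 1 - cP k) (fun k => 1 - cM k) α j
      = uhatB N u j - ucB N u cP cM α j := by
  unfold ucB uhatB uc; split_ifs <;> ring

lemma FhatB_comp (N : ℕ) (Dm Dp cP cM : ℕ → ℝ) (αt Δx : ℝ) (j : ℕ) :
    FhatB N Dm Dp (fun k => 1 - cP k) (fun k => 1 - cM k) αt Δx j
      = - FhatB N Dm Dp cP cM αt Δx j := by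
  unfold FhatB Fhat; split_ifs <;> ring

lemma rG_comp (Φ cP cM : ℕ → ℝ) (j : ℕ) (i : Fin 2) :
    rG Φ (fun k => 1 - cP k) (fun k => 1 - cM k) j i
      = phiG Φ j i - rG Φ cP cM j i := by
  unfold rG phiG; split_ifs <;> ring

/-- Consistency identity (1D): with the complementary data `c₂ = 1 - c`, `r₂ = Φ - r`,
`c̃₂ = 1 - c̃` and the discrete pressure relation, the two Euler-forward cell-average
updates sum exactly to `Φ̄_j = (Φ_{j-1/2} + Φ_{j+1/2})/2` in every cell. -/
theorem complementary_updates_sum_to_porosity_1d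
    (N : ℕ) (hN : 4 ≤ N) (Δx Δt : ℝ) (hΔx : 0 < Δx) (hΔt : 0 < Δt)
    (Φ cP cM u Dm Dp : ℕ → ℝ) (q ct P : ℕ → Fin 2 → ℝ) (α αt z1 z2 : ℝ)
    -- discrete pressure relation in every cell
    (hpress : ∀ j, 1 ≤ j → j ≤ N →
      (Δx / 2) * ∑ i : Fin 2,
          (z1 * rG Φ cP cM j i + z2 * (phiG Φ j i - rG Φ cP cM j i)) * P j i
        = uhatB N u (j - 1) - uhatB N u j + (Δx / 2) * ∑ i : Fin 2, q j i) :
    ∀ j, 1 ≤ j → j ≤ N →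
      rbarnew N Φ cP cM u Dm Dp q ct P α αt z1 Δx Δt j
        + rbarnew N Φ (fun k => 1 - cP k) (fun k => 1 - cM k) u Dm Dp q
            (fun k i => 1 - ct k i) P α αt z2 Δx Δt j
        = (Φ (j - 1) + Φ j) / 2 := by
  intro j h1 h2
  have hp := hpress j h1 h2
  have hx : (Δx:ℝ) ≠ 0 := ne_of_gt hΔx
  simp only [rbarnew, rbar, ucB_comp, FhatB_comp, rG_comp, Fin.sum_univ_two] at hp ⊢
  have hS2 : Δt / 2 * ((z1 * rG Φ cP cM j 0 + z2 * (phiG Φ j 0 - rG Φ cP cM j 0)) * P j 0 +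
        (z1 * rG Φ cP cM j 1 + z2 * (phiG Φ j 1 - rG Φ cP cM j 1)) * P j 1)
      = Δt / Δx * (uhatB N u (j - 1) - uhatB N u j) + Δt / 2 * (q j 0 + q j 1) := by
    field_simp at hp ⊢
    linear_combination hp
  linear_combination -hS2

end DG1D
end
end
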